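/- arXiv:2511.09504 — 5 statements merged into one kernel-verified Lean document; each statement's English description precedes it below -/
import Mathlib

section
/- Let F be a field and let M be an n×n matrix over F that is symmetric (Mᵀ = M) or skew-symmetric (Mᵀ = −M). Then the rank of M equals the maximum of |S| over all subsets S ⊆ {1,…,n} such that the principal submatrix M[S] is nonsingular (where M[∅] is nonsingular by convention, contributing the value 0). -/
open Matrix

/-- The principal submatrix of `M` with rows and columns indexed by the finite set `S`;
by convention the determinant of the empty principal submatrix is `1`, so it is nonsingular. -/
def psub {R V : Type*} (M : Matrix V V R) (S : Finset V) : Matrix ↥S ↥S R :=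
  M.submatrix Subtype.val Subtype.val

/-- Lemma 3.1: if `M` is an `n×n` symmetric or skew-symmetric matrix over a field, then
`rank M` is the maximum of `|S|` over all subsets `S ⊆ {1,…,n}` whose principal submatrix
`M[S]` is nonsingular (with `M[∅]` nonsingular by convention, contributing the value `0`). -/
theorem rank_eq_max_card_nonsingular_principal
    {F : Type*} [Field F] {n : ℕ} (M : Matrix (Fin n) (Fin n) F)
    (hM : Mᵀ = M ∨ Mᵀ = -M) :
    M.rank = sSup {k : ℕ | ∃ S : Finset (Fin n), (psub M S).det ≠ 0 ∧ S.card = k} := by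
  classical
  obtain ⟨ε, hε0, hsym⟩ : ∃ ε : F, ε ≠ 0 ∧ ∀ i j, M j i = ε * M i j := by
    rcases hM with h | h
    · refine ⟨1, one_ne_zero, fun i j => ?_⟩
      have := congrFun (congrFun h i) j
      rw [Matrix.transpose_apply] at this
      rw [one_mul, this]
    · refine ⟨-1, by norm_num, fun i j => ?_⟩
      have := congrFun (congrFun h i) j
      rw [Matrix.transpose_apply, Matrix.neg_apply] at this
      rw [this]; ring
  -- Upper bound: any nonsingular principal submatrix has card ≤ rank
  have hub : ∀ k ∈ {k : ℕ | ∃ S : Finset (Fin n), (psub M S).det ≠ 0 ∧ S.card = k},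
      k ≤ M.rank := by
    rintro k ⟨S, hdet, rfl⟩
    have hunit : IsUnit (psub M S) :=
      (Matrix.isUnit_iff_isUnit_det _).2 (isUnit_iff_ne_zero.2 hdet)
    have hli : LinearIndependent F (fun i : ↥S => psub M S i) :=
      Matrix.linearIndependent_rows_iff_isUnit.2 hunit
    have hli2 : LinearIndependent F (fun i : ↥S => M (i : Fin n)) := by
      apply LinearIndependent.of_comp (LinearMap.funLeft F F (Subtype.val : ↥S → Fin n))
      exact hli
    have h1 : S.card = Module.finrank F
        (Submodule.span F (Set.range fun i : ↥S => M (i : Fin n))) := by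
      rw [finrank_span_eq_card hli2, Fintype.card_coe]
    rw [h1, M.rank_eq_finrank_span_row]
    apply Submodule.finrank_mono
    apply Submodule.span_mono
    rintro _ ⟨i, rfl⟩
    exact ⟨(i : Fin n), rfl⟩
  -- Lower bound: there is a nonsingular principal submatrix of size rank M
  have hmem : M.rank ∈ {k : ℕ | ∃ S : Finset (Fin n), (psub M S).det ≠ 0 ∧ S.card = k} := by
    obtain ⟨I, hli, hmax⟩ := exists_maximal_linearIndepOn F (fun i : Fin n => M i)
    have hfin : I.Finite := Set.toFinite I
    set S : Finset (Fin n) := hfin.toFinset with hSdef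
    have hmemS : ∀ x, x ∈ S ↔ x ∈ I := fun x => hfin.mem_toFinset
    let e : ↥S ≃ ↥I := Equiv.subtypeEquivRight hmemS
    have hliS : LinearIndependent F (fun i : ↥S => M (i : Fin n)) := by
      have h := hli.comp e e.injective
      have heq : ((fun x : ↥I => M (x : Fin n)) ∘ e) = fun i : ↥S => M (i : Fin n) := by
        funext i; simp [e, Equiv.subtypeEquivRight]; rfl
      rwa [heq] at h
    have hspan : ∀ k, M k ∈ Submodule.span F ((fun i : Fin n => M i) '' I) := by
      intro k
      by_cases hk : k ∈ I
      · exact Submodule.subset_span ⟨k, hk, rfl⟩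
      · obtain ⟨a, ha0, hmemk⟩ := hmax k hk
        have h2 := Submodule.smul_mem _ a⁻¹ hmemk
        rwa [smul_smul, inv_mul_cancel₀ ha0, one_smul] at h2
    have hrange : Set.range (fun i : ↥S => M (i : Fin n)) = (fun i : Fin n => M i) '' I := by
      ext u
      constructor
      · rintro ⟨i, rfl⟩; exact ⟨(i : Fin n), (hmemS _).1 i.2, rfl⟩
      · rintro ⟨i, hi, rfl⟩; exact ⟨⟨i, (hmemS _).2 hi⟩, rfl⟩
    have hdet : (psub M S).det ≠ 0 := by
      intro h0
      have h0' : ((psub M S)ᵀ).det = 0 := by rw [Matrix.det_transpose]; exact h0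
      obtain ⟨v, hv0, hveq⟩ := Matrix.exists_mulVec_eq_zero_iff.2 h0'
      set w : Fin n → F := fun k => ∑ i : ↥S, v i * M (i : Fin n) k with hw
      have hwS : ∀ j : ↥S, w (j : Fin n) = 0 := by
        intro j
        have h3 := congrFun hveq j
        rw [Matrix.mulVec, dotProduct] at h3
        rw [hw]
        calc (∑ i : ↥S, v i * M (i : Fin n) (j : Fin n))
            = ∑ i : ↥S, (psub M S)ᵀ j i * v i := by
              apply Finset.sum_congr rfl; intro i _
              rw [Matrix.transpose_apply]; unfold psub
              rw [Matrix.submatrix_apply, mul_comm]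
          _ = 0 := h3
      set φ : (Fin n → F) →ₗ[F] F := ∑ i : ↥S, v i • LinearMap.proj (i : Fin n) with hφdef
      have hφ : ∀ u : Fin n → F, φ u = ∑ i : ↥S, v i * u (i : Fin n) := by
        intro u
        rw [hφdef, LinearMap.sum_apply]
        apply Finset.sum_congr rfl
        intro i _
        rw [LinearMap.smul_apply, LinearMap.proj_apply, smul_eq_mul]
      have hφrow : ∀ k, φ (M k) = ε * w k := by
        intro k
        rw [hφ, hw, Finset.mul_sum]
        apply Finset.sum_congr rfl
        intro i _
        rw [hsym (i : Fin n) k]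
        ring
      have hker : Submodule.span F ((fun i : Fin n => M i) '' I) ≤ LinearMap.ker φ := by
        rw [Submodule.span_le]
        rintro _ ⟨j, hj, rfl⟩
        have : φ (M j) = 0 := by
          rw [hφrow, hwS ⟨j, (hmemS _).2 hj⟩, mul_zero]
        exact this
      have hw0 : ∀ k, w k = 0 := by
        intro k
        have h4 := hker (hspan k)
        rw [LinearMap.mem_ker, hφrow] at h4
        exact (mul_eq_zero.1 h4).resolve_left hε0
      have hrel : ∑ i : ↥S, v i • (fun i : ↥S => M (i : Fin n)) i = 0 := by
        funext k
        rw [Finset.sum_apply]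
        have : ∑ i : ↥S, (v i • M (i : Fin n)) k = w k := by
          rw [hw]; apply Finset.sum_congr rfl; intro i _
          rw [Pi.smul_apply, smul_eq_mul]
        rw [this, hw0, Pi.zero_apply]
      have := Fintype.linearIndependent_iff.1 hliS v hrel
      exact hv0 (funext this)
    refine ⟨S, hdet, ?_⟩
    rw [M.rank_eq_finrank_span_row]
    have h5 : Submodule.span F (Set.range fun i : Fin n => M i)
        = Submodule.span F (Set.range fun i : ↥S => M (i : Fin n)) := by
      apply le_antisymm
      · rw [Submodule.span_le]
        rintro _ ⟨k, rfl⟩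
        rw [hrange]
        exact hspan k
      · apply Submodule.span_mono
        rintro _ ⟨i, rfl⟩
        exact ⟨(i : Fin n), rfl⟩
    rw [show Set.range M.row = Set.range (fun i : Fin n => M i) from rfl, h5, finrank_span_eq_card hliS, Fintype.card_coe]
  have hbdd : BddAbove {k : ℕ | ∃ S : Finset (Fin n), (psub M S).det ≠ 0 ∧ S.card = k} :=
    ⟨M.rank, hub⟩
  exact le_antisymm (le_csSup hbdd hmem) (csSup_le ⟨M.rank, hmem⟩ hub)
end

section
/- Let F be a field, let M be a skew-symmetric matrix over F with rows and columns indexed by a finite set E, and let D(M) = (E, {S ⊆ E : M[S] is nonsingular}). Then for every subset A ⊆ E, the width of the restriction D(M)|_A equals rank(M[A]); that is, max{|S| : S ⊆ A, M[S] nonsingular} − min{|S| : S ⊆ A, M[S] nonsingular} = rank(M[A]) (and since M[∅] is nonsingular the minimum is 0, so max{|S| : S ⊆ A, M[S] nonsingular} = rank(M[A])). -/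
open Matrix

section Helpers

open Module Submodule

variable {F : Type*} [Field F]


lemma rank_submatrix_le_left' {l m n : Type*} [Fintype n] (C : Matrix m n F) (f : l → m) :
    (C.submatrix f id).rank ≤ C.rank := by
  have h : (C.submatrix f id).mulVecLin = (LinearMap.funLeft F F f).comp C.mulVecLin := by
    ext v i
    simp [Matrix.mulVec, dotProduct]
  rw [Matrix.rank, Matrix.rank, h, LinearMap.range_comp]
  exact Submodule.finrank_map_le _ _

lemma rank_submatrix_le_gen {l l' m n : Type*} [Fintype m] [Fintype n] [Fintype l']
    (C : Matrix m n F) (f : l → m) (g : l' → n) :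
    (C.submatrix f g).rank ≤ C.rank := by
  have h1 : (C.submatrix f g) = ((C.submatrix id g).submatrix f id) := rfl
  rw [h1]
  refine le_trans (rank_submatrix_le_left' _ f) ?_
  have h2 : (C.submatrix id g) = ((Cᵀ.submatrix g id))ᵀ := rfl
  rw [h2, Matrix.rank_transpose]
  exact le_trans (rank_submatrix_le_left' _ g) (by rw [Matrix.rank_transpose])

variable {F : Type*} [Field F]

lemma rank_neg' {m n : Type*} [Fintype n] (B : Matrix m n F) : (-B).rank = B.rank := by
  have h : (-B).mulVecLin = -(B.mulVecLin) := by
    ext v i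
    simp [Matrix.neg_mulVec]
  rw [Matrix.rank, Matrix.rank, h, LinearMap.range_neg]

lemma rank_le_card' {n m : Type*} [Fintype n] (B : Matrix m n F) : B.rank ≤ Fintype.card n :=
  Matrix.rank_le_card_width B

lemma exists_principal {ι : Type*} [Fintype ι] [DecidableEq ι]
    (N : Matrix ι ι F) (hN : Nᵀ = -N) :
    ∃ R : Finset ι, (N.submatrix (Subtype.val : ↥R → ι) Subtype.val).det ≠ 0 ∧
      R.card = N.rank := by
  classical
  cases isEmpty_or_nonempty ι with
  | inl h =>
    refine ⟨∅, ?_, ?_⟩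
    · haveI : IsEmpty ↥(∅ : Finset ι) := ⟨fun x => (Finset.notMem_empty _ x.2)⟩
      rw [Matrix.det_isEmpty]
      exact one_ne_zero
    · have h1 : N.rank ≤ Fintype.card ι := Matrix.rank_le_card_width N
      simp [Fintype.card_eq_zero] at h1
      simp [h1]
  | inr h =>
  set c : ι → (ι → F) := Nᵀ with hc
  obtain ⟨s, hs_sub, hs_span, hs_li⟩ := exists_linearIndependent F (Set.range c)
  have hsfin : s.Finite := (Set.finite_range c).subset hs_sub
  have hchoice : ∀ v ∈ s, ∃ j, c j = v := fun v hv => hs_sub hv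
  choose! f hf using hchoice
  set R : Finset ι := hsfin.toFinset.image f with hR
  -- membership facts
  have hmemR : ∀ k : ι, k ∈ R → c k ∈ s ∧ f (c k) = k := by
    intro k hk
    rw [hR, Finset.mem_image] at hk
    obtain ⟨v, hv, rfl⟩ := hk
    rw [Set.Finite.mem_toFinset] at hv
    rw [hf v hv]
    exact ⟨hv, rfl⟩
  have hRs : (Set.range fun k : ↥R => c ↑k) = s := by
    ext v
    constructor
    · rintro ⟨k, rfl⟩
      exact (hmemR _ k.2).1
    · intro hv
      have hfv : f v ∈ R := by
        rw [hR, Finset.mem_image]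
        exact ⟨v, hsfin.mem_toFinset.mpr hv, rfl⟩
      exact ⟨⟨f v, hfv⟩, hf v hv⟩
  -- linear independence of the chosen columns
  have hli : LinearIndependent F (fun k : ↥R => c ↑k) := by
    have einj : Function.Injective
        (fun k : ↥R => (⟨c ↑k, (hmemR _ k.2).1⟩ : s)) := by
      intro k₁ k₂ h
      have h' : c ↑k₁ = c ↑k₂ := congrArg Subtype.val h
      have : f (c ↑k₁) = f (c ↑k₂) := by rw [h']
      rw [(hmemR _ k₁.2).2, (hmemR _ k₂.2).2] at this
      exact Subtype.ext this
    exact hs_li.comp _ einj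
  -- cardinality
  have hspan2 : Submodule.span F (Set.range fun k : ↥R => c ↑k)
      = Submodule.span F (Set.range c) := by rw [hRs, hs_span]
  have hcard : R.card = N.rank := by
    rw [Matrix.rank_eq_finrank_span_cols, show N.col = c from rfl, ← hspan2,
      finrank_span_eq_card hli, Fintype.card_coe]
  refine ⟨R, ?_, hcard⟩
  -- the factorization N = N[·,R] * Y
  have hmemspan : ∀ j : ι, c j ∈ Submodule.span F (Set.range fun k : ↥R => c ↑k) := by
    intro j
    rw [hspan2]
    exact Submodule.subset_span ⟨j, rfl⟩
  set b := Basis.span hli with hb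
  set Y : Matrix ↥R ι F := fun k j => b.repr ⟨c j, hmemspan j⟩ k with hY
  have hfact : N = N.submatrix id (Subtype.val : ↥R → ι) * Y := by
    ext i j
    have := congrArg (Subtype.val) (b.sum_repr ⟨c j, hmemspan j⟩)
    have h2 := congrFun this i
    simp only [AddSubmonoidClass.coe_finset_sum, SetLike.val_smul, Finset.sum_apply,
      Pi.smul_apply, smul_eq_mul] at h2
    rw [Matrix.mul_apply]
    simp only [submatrix_apply, id_eq]
    have h3 : N i j = c j i := rfl
    rw [h3, ← h2]
    refine Finset.sum_congr rfl fun k _ => ?_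
    rw [hb]
    have h5 := congrFun (congrArg Subtype.val (Module.Basis.span_apply hli k)) i
    rw [h5]
    exact mul_comm _ _
  have hrows : N.submatrix (Subtype.val : ↥R → ι) id
      = N.submatrix Subtype.val Subtype.val * Y := by
    conv_lhs => rw [hfact]
    rw [Matrix.submatrix_mul _ _ Subtype.val id id Function.bijective_id]
    simp [Matrix.submatrix_submatrix]
    rfl
  -- rank of the row-selected matrix equals N.rank
  have hcols_rank : (N.submatrix id (Subtype.val : ↥R → ι)).rank = N.rank := by
    have hsets : Set.range (N.submatrix id (Subtype.val : ↥R → ι)).col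
        = Set.range fun k : ↥R => c ↑k := rfl
    rw [Matrix.rank_eq_finrank_span_cols, hsets, hspan2, show c = N.col from rfl,
      ← Matrix.rank_eq_finrank_span_cols]
  have hrows_rank : (N.submatrix (Subtype.val : ↥R → ι) id).rank = N.rank := by
    have ht : (N.submatrix (Subtype.val : ↥R → ι) id)ᵀ
        = -(N.submatrix id (Subtype.val : ↥R → ι)) := by
      ext j k
      simp only [transpose_apply, submatrix_apply, id_eq, Matrix.neg_apply]
      have := congrFun (congrFun hN j) ↑k
      simpa [hc] using this
    rw [← Matrix.rank_transpose, ht, rank_neg', hcols_rank]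
  -- the principal submatrix has full rank
  have hfull : (N.submatrix (Subtype.val : ↥R → ι) (Subtype.val : ↥R → ι)).rank = R.card := by
    refine le_antisymm ((Matrix.rank_le_card_width _).trans_eq (Fintype.card_coe R)) ?_
    rw [hcard, ← hrows_rank, hrows]
    exact Matrix.rank_mul_le_left _ _
  -- conclude det ≠ 0
  intro h0
  obtain ⟨v, hv, hBv⟩ := (Matrix.exists_mulVec_eq_zero_iff).mpr h0
  have hker : v ∈ LinearMap.ker (N.submatrix (Subtype.val : ↥R → ι) (Subtype.val : ↥R → ι)).mulVecLin := by
    simpa using hBv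
  have hrn := LinearMap.finrank_range_add_finrank_ker
    (N.submatrix (Subtype.val : ↥R → ι) (Subtype.val : ↥R → ι)).mulVecLin
  rw [Module.finrank_pi, Fintype.card_coe] at hrn
  have hker0 : finrank F
      (LinearMap.ker (N.submatrix (Subtype.val : ↥R → ι) (Subtype.val : ↥R → ι)).mulVecLin) = 0 := by
    have hrk : (N.submatrix (Subtype.val : ↥R → ι) (Subtype.val : ↥R → ι)).rank
        = finrank F (LinearMap.range (N.submatrix (Subtype.val : ↥R → ι) (Subtype.val : ↥R → ι)).mulVecLin) := rfl
    omega
  rw [Submodule.finrank_eq_zero] at hker0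
  rw [hker0] at hker
  exact hv (by simpa using hker)

end Helpers

/-- Lemma 3.2: let `M` be a skew-symmetric matrix over a field `F` with rows and columns
indexed by a finite set `E`, and let `D(M)` be the delta-matroid whose feasible sets are
the `S ⊆ E` with `M[S]` nonsingular.  For every `A ⊆ E`, the width of the restriction
`D(M)|_A` equals `rank M[A]`: that is,
`max{|S| : S ⊆ A, M[S] nonsingular} − min{|S| : S ⊆ A, M[S] nonsingular} = rank M[A]`,
and (since `M[∅]` is nonsingular, the minimum is `0`)
`max{|S| : S ⊆ A, M[S] nonsingular} = rank M[A]`. -/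
theorem width_restriction_eq_rank
    {F : Type*} [Field F] {E : Type*} [Fintype E] [DecidableEq E]
    (M : Matrix E E F) (hM : Mᵀ = -M) (A : Finset E) :
    sSup {k : ℕ | ∃ S : Finset E, (S ⊆ A ∧ (psub M S).det ≠ 0) ∧ S.card = k}
        - sInf {k : ℕ | ∃ S : Finset E, (S ⊆ A ∧ (psub M S).det ≠ 0) ∧ S.card = k}
        = (psub M A).rank
    ∧ sSup {k : ℕ | ∃ S : Finset E, (S ⊆ A ∧ (psub M S).det ≠ 0) ∧ S.card = k}
        = (psub M A).rank := by
  classical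
  set T := {k : ℕ | ∃ S : Finset E, (S ⊆ A ∧ (psub M S).det ≠ 0) ∧ S.card = k} with hT
  have h0 : 0 ∈ T := by
    refine ⟨∅, ⟨Finset.empty_subset A, ?_⟩, Finset.card_empty⟩
    haveI : IsEmpty ↥(∅ : Finset E) := ⟨fun x => (Finset.notMem_empty _ x.2)⟩
    rw [Matrix.det_isEmpty]
    exact one_ne_zero
  have hinf : sInf T = 0 := Nat.sInf_eq_zero.mpr (Or.inl h0)
  have hub : ∀ k ∈ T, k ≤ (psub M A).rank := by
    rintro k ⟨S, ⟨hSA, hdet⟩, rfl⟩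
    have h1 : (psub M S).rank = S.card := by
      rw [Matrix.rank_of_isUnit _ ((Matrix.isUnit_iff_isUnit_det _).mpr
        (isUnit_iff_ne_zero.mpr hdet)), Fintype.card_coe]
    have h2 : psub M S = (psub M A).submatrix
        (fun x : ↥S => (⟨x.1, hSA x.2⟩ : ↥A)) (fun x : ↥S => (⟨x.1, hSA x.2⟩ : ↥A)) := rfl
    rw [← h1, h2]
    exact rank_submatrix_le_gen _ _ _
  have hskew : (psub M A)ᵀ = -(psub M A) := by
    ext i j
    have := congrFun (congrFun hM ↑i) ↑j
    simpa [psub] using this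
  obtain ⟨R, hdet, hcardR⟩ := exists_principal (psub M A) hskew
  set R' : Finset E := R.map ⟨Subtype.val, Subtype.val_injective⟩ with hR'
  have hsub : R' ⊆ A := by
    intro x hx
    rw [hR', Finset.mem_map] at hx
    obtain ⟨a, _, rfl⟩ := hx
    exact a.2
  have hcard' : R'.card = (psub M A).rank := by rw [hR', Finset.card_map, hcardR]
  have hmemA : ∀ x : ↥R', (x : E) ∈ A := fun x => hsub x.2
  have hmemR : ∀ x : ↥R', (⟨(x : E), hmemA x⟩ : ↥A) ∈ R := by
    intro x
    obtain ⟨a, ha, hax⟩ := Finset.mem_map.mp x.2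
    have hax' : (⟨(x : E), hmemA x⟩ : ↥A) = a := Subtype.ext (by rw [← hax]; rfl)
    rw [hax']
    exact ha
  set e : ↥R' ≃ ↥R :=
    { toFun := fun x => ⟨⟨(x : E), hmemA x⟩, hmemR x⟩
      invFun := fun k => ⟨((k : ↥A) : E), by
        rw [hR', Finset.mem_map]; exact ⟨k.1, k.2, rfl⟩⟩
      left_inv := fun x => Subtype.ext rfl
      right_inv := fun k => Subtype.ext (Subtype.ext rfl) } with he
  have hdet' : (psub M R').det ≠ 0 := by
    have hrfl : psub M R'
        = ((psub M A).submatrix (Subtype.val : ↥R → ↥A) Subtype.val).submatrix e e := rfl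
    rw [hrfl, Matrix.det_submatrix_equiv_self]
    exact hdet
  have hmem : (psub M A).rank ∈ T := ⟨R', ⟨hsub, hdet'⟩, hcard'⟩
  have hbdd : BddAbove T := ⟨(psub M A).rank, fun k hk => hub k hk⟩
  have hsup : sSup T = (psub M A).rank :=
    le_antisymm (csSup_le ⟨0, h0⟩ hub) (le_csSup hbdd hmem)
  exact ⟨by rw [hsup, hinf, Nat.sub_zero], hsup⟩
end

section
/- Let G1 be the looped simple graph with exactly two vertices w and v1 connected by an edge, where w is unlooped. Let G2 be any looped simple graph with a vertex v2 having the same loop status as v1. Then T_{(G1,v1)∨(G2,v2)}(z) = T_{G2}(z) + 2z²·T_{G2−v2}(z). -/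
open Matrix Polynomial
open scoped symmDiff

section Interface
variable {V : Type*} [Fintype V] [DecidableEq V]

lemma sum_restrict (S : Finset V) (f : V → ZMod 2) (hf : ∀ j ∉ S, f j = 0) :
    ∑ j : V, f j = ∑ j : ↥S, f j.1 := by
  rw [Finset.sum_coe_sort S f]
  symm
  apply Finset.sum_subset (Finset.subset_univ S)
  intro j _ hj
  exact hf j hj

lemma det_psub_eq_zero_iff (M : Matrix V V (ZMod 2)) (S : Finset V) :
    (psub M S).det = 0 ↔ ∃ x : V → ZMod 2, x ≠ 0 ∧ (∀ j ∉ S, x j = 0) ∧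
      (∀ i ∈ S, M.mulVec x i = 0) := by
  rw [← Matrix.exists_mulVec_eq_zero_iff]
  constructor
  · rintro ⟨y, hy0, hy⟩
    set x : V → ZMod 2 := fun j => if h : j ∈ S then y ⟨j, h⟩ else 0 with hxdef
    have hsupp : ∀ j ∉ S, x j = 0 := by intro j hj; simp [hxdef, hj]
    refine ⟨x, ?_, hsupp, ?_⟩
    · intro h
      apply hy0
      funext j
      have := congrFun h j.1
      simpa [hxdef, j.2] using this
    · intro i hi
      have h1 := congrFun hy ⟨i, hi⟩
      rw [Matrix.mulVec, dotProduct] at h1 ⊢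
      rw [Pi.zero_apply] at h1
      rw [sum_restrict S (fun j => M i j * x j) (fun j hj => by simp [hsupp j hj])]
      rw [← h1]
      apply Finset.sum_congr rfl
      intro j _
      simp [psub, hxdef, j.2]
  · rintro ⟨x, hx0, hsupp, hker⟩
    refine ⟨fun j => x j.1, ?_, ?_⟩
    · intro h
      apply hx0
      funext j
      by_cases hj : j ∈ S
      · exact congrFun h ⟨j, hj⟩
      · exact hsupp j hj
    · funext i
      have := hker i.1 i.2
      rw [Matrix.mulVec, dotProduct] at this ⊢
      rw [Pi.zero_apply, ← this]
      rw [sum_restrict S (fun j => M i.1 j * x j) (fun j hj => by simp [hsupp j hj])]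
      apply Finset.sum_congr rfl
      intro j _
      simp [psub]

lemma zmod2_eq_one {a : ZMod 2} (h : a ≠ 0) : a = 1 := by
  revert h; revert a; decide

lemma exchange_core (M : Matrix V V (ZMod 2)) (hM : M.IsSymm) {F : Finset V} {v : V}
    (hv : v ∈ F) (hF : (psub M F).det ≠ 0) :
    ∃ F', F' ⊆ F.erase v ∧ (psub M F').det ≠ 0 ∧ (F.erase v).card ≤ F'.card + 1 := by
  by_cases h1 : (psub M (F.erase v)).det ≠ 0
  · exact ⟨F.erase v, Finset.Subset.refl _, h1, Nat.le_succ _⟩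
  push_neg at h1
  obtain ⟨x, hx0, hxsupp, hxker⟩ := (det_psub_eq_zero_iff M (F.erase v)).1 h1
  obtain ⟨u, hxu⟩ : ∃ u, x u ≠ 0 := by
    by_contra h; push_neg at h; exact hx0 (funext fun j => h j)
  have hu : u ∈ F.erase v := by
    by_contra h; exact hxu (hxsupp u h)
  have hxsuppF : ∀ j ∉ F, x j = 0 := fun j hj =>
    hxsupp j (fun h => hj (Finset.mem_of_mem_erase h))
  have hβ : M.mulVec x v ≠ 0 := by
    intro hβ0
    apply hF
    rw [det_psub_eq_zero_iff]
    refine ⟨x, hx0, hxsuppF, ?_⟩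
    intro i hi
    by_cases hiv : i = v
    · rwa [hiv]
    · exact hxker i (Finset.mem_erase.2 ⟨hiv, hi⟩)
  refine ⟨(F.erase v).erase u, Finset.erase_subset _ _, ?_, ?_⟩
  · intro h2
    obtain ⟨y, hy0, hysupp, hyker⟩ := (det_psub_eq_zero_iff M _).1 h2
    have hyu : y u = 0 := hysupp u (Finset.notMem_erase u _)
    -- t = M.mulVec y u = 0 via symmetry
    have hsym : ∀ a b, M a b = M b a := fun a b => by
      have := congrFun (congrFun hM b) a
      simpa [Matrix.transpose_apply] using this
    have ht : M.mulVec y u = 0 := by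
      have hdot : x ⬝ᵥ (M.mulVec y) = (M.mulVec x) ⬝ᵥ y := by
        rw [Matrix.dotProduct_mulVec]
        congr 1
        funext j
        rw [Matrix.vecMul, Matrix.mulVec]
        simp only [dotProduct]
        exact Finset.sum_congr rfl fun i _ => by rw [hsym j i, mul_comm]
      have hL : x ⬝ᵥ (M.mulVec y) = x u * M.mulVec y u := by
        rw [dotProduct]
        apply Finset.sum_eq_single u
        · intro i _ hiu
          by_cases hi : i ∈ F.erase v
          · rw [hyker i (Finset.mem_erase.2 ⟨hiu, hi⟩), mul_zero]
          · rw [hxsupp i hi, zero_mul]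
        · intro h; exact absurd (Finset.mem_univ u) h
      have hR : (M.mulVec x) ⬝ᵥ y = 0 := by
        rw [dotProduct]
        apply Finset.sum_eq_zero
        intro i _
        by_cases hi : i ∈ (F.erase v).erase u
        · rw [hxker i (Finset.mem_of_mem_erase hi), zero_mul]
        · rw [hysupp i hi, mul_zero]
      have := hL.symm.trans (hdot.trans hR)
      rcases mul_eq_zero.1 this with h | h
      · exact absurd h hxu
      · exact h
    have hs : M.mulVec y v ≠ 0 := by
      intro hs0
      apply hF
      rw [det_psub_eq_zero_iff]
      refine ⟨y, hy0, fun j hj => hysupp j (fun h =>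
        hj (Finset.mem_of_mem_erase (Finset.mem_of_mem_erase h))), ?_⟩
      intro i hi
      by_cases hiv : i = v
      · rwa [hiv]
      by_cases hiu : i = u
      · rwa [hiu]
      exact hyker i (Finset.mem_erase.2 ⟨hiu, Finset.mem_erase.2 ⟨hiv, hi⟩⟩)
    apply hF
    rw [det_psub_eq_zero_iff]
    refine ⟨x + y, ?_, ?_, ?_⟩
    · intro h
      have := congrFun h u
      rw [Pi.add_apply, hyu, add_zero] at this
      exact hxu this
    · intro j hj
      rw [Pi.add_apply, hxsuppF j hj,
        hysupp j (fun h => hj (Finset.mem_of_mem_erase (Finset.mem_of_mem_erase h))), add_zero]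
    · intro i hi
      rw [Matrix.mulVec_add, Pi.add_apply]
      by_cases hiv : i = v
      · subst hiv
        rw [zmod2_eq_one hβ, zmod2_eq_one hs]; decide
      by_cases hiu : i = u
      · subst hiu
        rw [hxker i (Finset.mem_erase.2 ⟨hiv, hi⟩), ht, add_zero]
      rw [hxker i (Finset.mem_erase.2 ⟨hiv, hi⟩),
        hyker i (Finset.mem_erase.2 ⟨hiu, Finset.mem_erase.2 ⟨hiv, hi⟩⟩), add_zero]
  · rw [Finset.card_erase_of_mem hu]
    omega

-- symmDiff card lemmas
lemma erase_symmDiff_of_mem {F C : Finset V} {v : V} (hv : v ∈ F) (hvC : v ∉ C) :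
    (F.erase v) ∆ C = (F ∆ C).erase v := by
  ext x
  simp only [Finset.mem_symmDiff, Finset.mem_erase]
  by_cases hx : x = v <;> subst_eqs <;> simp_all <;> tauto

lemma card_symmDiff_erase {F C : Finset V} {v : V} (hv : v ∈ F) (hvC : v ∉ C) :
    (F ∆ C).card = ((F.erase v) ∆ C).card + 1 := by
  rw [erase_symmDiff_of_mem hv hvC, Finset.card_erase_of_mem]
  · have : v ∈ F ∆ C := Finset.mem_symmDiff.2 (Or.inl ⟨hv, hvC⟩)
    have := Finset.card_pos.2 ⟨v, this⟩
    omega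
  · exact Finset.mem_symmDiff.2 (Or.inl ⟨hv, hvC⟩)

lemma insert_symmDiff_of_not_mem {s t : Finset V} {a : V} (ha : a ∉ s) (ha' : a ∉ t) :
    (insert a s) ∆ t = insert a (s ∆ t) := by
  ext x
  simp only [Finset.mem_symmDiff, Finset.mem_insert]
  by_cases hx : x = a <;> subst_eqs <;> simp_all <;> tauto

lemma card_insert_symmDiff {s t : Finset V} {a : V} (ha : a ∉ s) (ha' : a ∉ t) :
    ((insert a s) ∆ t).card = (s ∆ t).card + 1 := by
  rw [insert_symmDiff_of_not_mem ha ha', Finset.card_insert_of_notMem]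
  intro h
  rcases Finset.mem_symmDiff.1 h with ⟨h1, _⟩ | ⟨h1, _⟩
  exacts [ha h1, ha' h1]

lemma symmDiff_insert_insert {s t : Finset V} {a : V} (ha : a ∉ s) (ha' : a ∉ t) :
    (insert a s) ∆ (insert a t) = s ∆ t := by
  ext x
  simp only [Finset.mem_symmDiff, Finset.mem_insert]
  by_cases hx : x = a <;> subst_eqs <;> simp_all

lemma erase_symmDiff_erase {F B : Finset V} {v : V} (hv : v ∈ F) (hvB : v ∈ B) :
    F ∆ B = (F.erase v) ∆ (B.erase v) := by
  ext x
  simp only [Finset.mem_symmDiff, Finset.mem_erase]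
  by_cases hx : x = v <;> subst_eqs <;> simp_all <;> tauto

-- within-one card lemma for erase
lemma card_symmDiff_erase_within {G C : Finset V} (u : V) :
    ((G.erase u) ∆ C).card ≤ (G ∆ C).card + 1 ∧ (G ∆ C).card ≤ ((G.erase u) ∆ C).card + 1 := by
  by_cases hu : u ∈ G
  · by_cases huC : u ∈ C
    · -- erase u G ∆ C = insert u (G ∆ C)
      have h : (G.erase u) ∆ C = insert u (G ∆ C) := by
        ext x
        simp only [Finset.mem_symmDiff, Finset.mem_erase, Finset.mem_insert]
        by_cases hx : x = u <;> subst_eqs <;> simp_all <;> tauto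
      rw [h, Finset.card_insert_of_notMem (by
        simp only [Finset.mem_symmDiff]; tauto)]
      omega
    · rw [card_symmDiff_erase hu huC]; omega
  · rw [Finset.erase_eq_of_notMem hu]; omega

-- final exchange
lemma exchange (M : Matrix V V (ZMod 2)) (hM : M.IsSymm) {F C : Finset V} {v : V}
    (hv : v ∈ F) (hvC : v ∉ C) (hF : (psub M F).det ≠ 0) :
    ∃ F', v ∉ F' ∧ (psub M F').det ≠ 0 ∧
      (F' ∆ C).card ≤ (F ∆ C).card ∧ (F ∆ C).card ≤ (F' ∆ C).card + 2 := by
  obtain ⟨F', hsub, hdet, hcard⟩ := exchange_core M hM hv hF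
  have hvF' : v ∉ F' := fun h => Finset.notMem_erase v F (hsub h)
  have key : (F' ∆ C).card ≤ (F ∆ C).card ∧ (F ∆ C).card ≤ (F' ∆ C).card + 2 := by
    have h1 : (F ∆ C).card = ((F.erase v) ∆ C).card + 1 := card_symmDiff_erase hv hvC
    -- F' = F.erase v  or  F' = (F.erase v).erase u
    have h2 : ((F' ∆ C).card ≤ ((F.erase v) ∆ C).card + 1 ∧
        ((F.erase v) ∆ C).card ≤ (F' ∆ C).card + 1) ∧
        ((F' ∆ C).card ≤ (F ∆ C).card ∧ (F ∆ C).card ≤ (F' ∆ C).card + 2) := by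
      by_cases heq : F' = F.erase v
      · subst heq; constructor
        · exact ⟨Nat.le_succ _, Nat.le_succ _⟩
        · omega
      · obtain ⟨u, huF, huF'⟩ : ∃ u, u ∈ F.erase v ∧ u ∉ F' := by
          by_contra hc
          push_neg at hc
          exact heq (Finset.eq_of_subset_of_card_le hsub
            (Finset.card_le_card fun x hx => hc x hx))
        have hF'eq : F' = (F.erase v).erase u := by
          apply Finset.eq_of_subset_of_card_le
          · intro x hx
            exact Finset.mem_erase.2 ⟨fun h => huF' (h ▸ hx), hsub hx⟩
          · rw [Finset.card_erase_of_mem huF]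
            omega
        have := card_symmDiff_erase_within (G := F.erase v) (C := C) u
        rw [← hF'eq] at this
        constructor
        · exact ⟨this.1, this.2⟩
        · omega
    exact h2.2
  exact ⟨F', hvF', hdet, key.1, key.2⟩

-- ### Nat set width helpers
lemma nat_sSup_shift (K : Set ℕ) (hne : K.Nonempty) (hbdd : BddAbove K) (n : ℕ) :
    sSup ((· + n) '' K) = sSup K + n := by
  apply le_antisymm
  · apply csSup_le (hne.image _)
    rintro _ ⟨m, hm, rfl⟩
    exact Nat.add_le_add_right (le_csSup hbdd hm) n
  · refine le_csSup ?_ ⟨sSup K, Nat.sSup_mem hne hbdd, rfl⟩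
    obtain ⟨u, hu⟩ := hbdd
    exact ⟨u + n, by rintro _ ⟨m, hm, rfl⟩; exact Nat.add_le_add_right (hu hm) n⟩

lemma nat_sInf_shift (K : Set ℕ) (hne : K.Nonempty) (n : ℕ) :
    sInf ((· + n) '' K) = sInf K + n := by
  apply le_antisymm
  · exact Nat.sInf_le ⟨sInf K, Nat.sInf_mem hne, rfl⟩
  · apply le_csInf (hne.image _)
    rintro _ ⟨m, hm, rfl⟩
    exact Nat.add_le_add_right (Nat.sInf_le hm) n

lemma width_union_calc (KO KI : Set ℕ) (hne : KO.Nonempty) (hbddO : BddAbove KO)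
    (hbddI : BddAbove KI)
    (hex : ∀ k ∈ KI, ∃ j ∈ KO, j ≤ k ∧ k ≤ j + 2) :
    sSup (KO ∪ KI ∪ ((· + 2) '' KO)) - sInf (KO ∪ KI ∪ ((· + 2) '' KO))
      = (sSup KO - sInf KO) + 2 := by
  have hbddU : BddAbove (KO ∪ KI ∪ ((· + 2) '' KO)) := by
    obtain ⟨u, hu⟩ := hbddO
    obtain ⟨w, hw⟩ := hbddI
    refine ⟨u + w + 2, ?_⟩
    rintro k ((hk | hk) | ⟨m, hm, rfl⟩)
    · have := hu hk; omega
    · have := hw hk; omega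
    · have := hu hm; dsimp only; omega
  have hSup : sSup (KO ∪ KI ∪ ((· + 2) '' KO)) = sSup KO + 2 := by
    apply le_antisymm
    · apply csSup_le ⟨sSup KO + 2, Or.inr ⟨sSup KO, Nat.sSup_mem hne hbddO, rfl⟩⟩
      rintro k ((hk | hk) | ⟨m, hm, rfl⟩)
      · have := le_csSup hbddO hk; omega
      · obtain ⟨j, hj, _, hk2⟩ := hex k hk
        have := le_csSup hbddO hj; omega
      · have := le_csSup hbddO hm; dsimp only; omega
    · exact le_csSup hbddU (Or.inr ⟨sSup KO, Nat.sSup_mem hne hbddO, rfl⟩)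
  have hInf : sInf (KO ∪ KI ∪ ((· + 2) '' KO)) = sInf KO := by
    apply le_antisymm
    · exact Nat.sInf_le (Or.inl (Or.inl (Nat.sInf_mem hne)))
    · apply le_csInf ⟨sInf KO, Or.inl (Or.inl (Nat.sInf_mem hne))⟩
      rintro k ((hk | hk) | ⟨m, hm, rfl⟩)
      · exact Nat.sInf_le hk
      · obtain ⟨j, hj, hk1, _⟩ := hex k hk
        exact le_trans (Nat.sInf_le hj) hk1
      · have := Nat.sInf_le hm; dsimp only; omega
  rw [hSup, hInf]
  have h1 : sInf KO ≤ sSup KO := le_csSup hbddO (Nat.sInf_mem hne)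
  omega

end Interface

-- ### sum splitting helpers
lemma sum_split_finset {V : Type*} [Fintype V] [DecidableEq V] (v : V) {M : Type*}
    [AddCommMonoid M] (f : Finset V → M) :
    ∑ A : Finset V, f A
      = ∑ A ∈ ((Finset.univ : Finset V).erase v).powerset, (f A + f (insert v A)) := by
  have h0 : (Finset.univ : Finset (Finset V))
      = (insert v ((Finset.univ : Finset V).erase v)).powerset := by
    rw [Finset.insert_erase (Finset.mem_univ v), Finset.powerset_univ]
  rw [h0, Finset.sum_powerset_insert (Finset.notMem_erase v _), Finset.sum_add_distrib]

lemma sum_powerset_subtype {V : Type*} [Fintype V] [DecidableEq V] (v : V) {M : Type*}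
    [AddCommMonoid M] (h : Finset V → M) :
    ∑ A ∈ ((Finset.univ : Finset V).erase v).powerset, h A
      = ∑ B : Finset {u : V // u ≠ v}, h (B.map (Function.Embedding.subtype _)) := by
  apply Finset.sum_nbij' (fun A => A.subtype (· ≠ v))
    (fun B => B.map (Function.Embedding.subtype _))
  · intro A _; exact Finset.mem_univ _
  · intro B _
    rw [Finset.mem_powerset]
    intro x hx
    obtain ⟨b, _, rfl⟩ := Finset.mem_map.1 hx
    exact Finset.mem_erase.2 ⟨b.2, Finset.mem_univ _⟩
  · intro A hA
    apply Finset.subtype_map_of_mem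
    intro x hx
    exact (Finset.mem_erase.1 (Finset.mem_powerset.1 hA hx)).1
  · intro B _
    ext b
    simp only [Finset.mem_subtype, Finset.mem_map, Function.Embedding.coe_subtype]
    constructor
    · rintro ⟨a, ha, hab⟩
      rwa [← Subtype.ext hab]
    · intro hb
      exact ⟨b, hb, rfl⟩
  · intro A hA
    congr 1
    symm
    apply Finset.subtype_map_of_mem
    intro x hx
    exact (Finset.mem_erase.1 (Finset.mem_powerset.1 hA hx)).1

noncomputable def sysWidth {V : Type*} (P : Finset V → Prop) : ℕ :=
  sSup {k | ∃ S, P S ∧ S.card = k} - sInf {k | ∃ S, P S ∧ S.card = k}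

/-- The width of the twist `D(M) * A`, where `D(M)` is the delta-matroid of the
symmetric matrix `M` (feasible sets = index sets of nonsingular principal submatrices):
a set `S` is feasible in `D(M) * A` iff `S ∆ A` is feasible in `D(M)`. -/
noncomputable def twistWidth {R V : Type*} [CommRing R] [DecidableEq V]
    (M : Matrix V V R) (A : Finset V) : ℕ :=
  sysWidth fun S => (psub M (symmDiff S A)).det ≠ 0

/-- The twist polynomial of the looped simple graph with adjacency matrix `M` over `𝔽₂`:
`T_G(z) = Σ_{A ⊆ V(G)} z^{w(D(G)*A)}`. -/
noncomputable def twistPoly {R V : Type*} [CommRing R] [Fintype V] [DecidableEq V]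
    (M : Matrix V V R) : Polynomial ℤ :=
  ∑ A : Finset V, (X : Polynomial ℤ) ^ twistWidth M A

/-- Vertex deletion `G - v`: delete the row and column of the adjacency matrix at `v`. -/
def vdel {R V : Type*} (M : Matrix V V R) (v : V) :
    Matrix {u : V // u ≠ v} {u : V // u ≠ v} R :=
  M.submatrix Subtype.val Subtype.val

/-- Loop complementation `G + v`: add `1` to the diagonal entry at `v` (over `𝔽₂`). -/
def lcomp {V : Type*} [DecidableEq V] (M : Matrix V V (ZMod 2)) (v : V) :
    Matrix V V (ZMod 2) :=
  M + Matrix.single v v 1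

/-- The adjacency matrix of the one-point join `(G1,v1) ∨ (G2,v2)`: the vertex set is
the disjoint union of `V(G1) \ {v1}` and `V(G2)`, where `Sum.inr v2` plays the role of
the identified vertex `v`; it inherits the loop status and all adjacencies of `v1` and
`v2`, and no vertex of `G1 - v1` is adjacent to a vertex of `G2 - v2`. -/
def onePointJoin {V1 V2 : Type*} [DecidableEq V2] (M1 : Matrix V1 V1 (ZMod 2)) (v1 : V1)
    (M2 : Matrix V2 V2 (ZMod 2)) (v2 : V2) :
    Matrix ({u : V1 // u ≠ v1} ⊕ V2) ({u : V1 // u ≠ v1} ⊕ V2) (ZMod 2) :=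
  Matrix.of fun i j =>
    match i, j with
    | Sum.inl a, Sum.inl b => M1 a.1 b.1
    | Sum.inl a, Sum.inr b => if b = v2 then M1 a.1 v1 else 0
    | Sum.inr a, Sum.inl b => if a = v2 then M1 v1 b.1 else 0
    | Sum.inr a, Sum.inr b => M2 a b


section Join
variable {V2 : Type*} [Fintype V2] [DecidableEq V2] (M2 : Matrix V2 V2 (ZMod 2)) (v2 : V2)

abbrev W1 := {u : Fin 2 // u ≠ (1 : Fin 2)}

def w0 : W1 := ⟨0, by decide⟩

instance : Unique W1 := ⟨⟨w0⟩, by decide⟩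

local notation "MJ" => onePointJoin !![0, 1; 1, M2 v2 v2] (1 : Fin 2) M2 v2

lemma MJ_ll (a b : W1) : MJ (Sum.inl a) (Sum.inl b) = 0 := by
  have ha : a = w0 := Subsingleton.elim _ _
  have hb : b = w0 := Subsingleton.elim _ _
  subst ha hb
  show !![0, 1; 1, M2 v2 v2] w0.1 w0.1 = 0
  show !![0, 1; 1, M2 v2 v2] 0 0 = 0
  simp

lemma MJ_lr (a : W1) (b : V2) : MJ (Sum.inl a) (Sum.inr b) = if b = v2 then 1 else 0 := by
  have ha : a = w0 := Subsingleton.elim _ _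
  subst ha
  show (if b = v2 then !![0, 1; 1, M2 v2 v2] w0.1 1 else 0) = _
  by_cases hb : b = v2 <;> simp [hb]
  show !![0, 1; 1, M2 v2 v2] 0 1 = 1
  simp

lemma MJ_rl (a : V2) (b : W1) : MJ (Sum.inr a) (Sum.inl b) = if a = v2 then 1 else 0 := by
  show (if a = v2 then !![0, 1; 1, M2 v2 v2] 1 b.1 else 0) = _
  have hb : b = w0 := Subsingleton.elim _ _
  subst hb
  by_cases ha : a = v2 <;> simp [ha]
  show !![0, 1; 1, M2 v2 v2] 1 0 = 1
  simp

lemma MJ_rr (a b : V2) : MJ (Sum.inr a) (Sum.inr b) = M2 a b := rfl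

def emb2 : V2 ↪ (W1 ⊕ V2) := ⟨Sum.inr, Sum.inr_injective⟩

lemma feasA (B : Finset V2) :
    (psub MJ (B.map (emb2 (V2 := V2)))).det = (psub M2 B).det := by
  have hf : Function.Bijective (fun b : ↥B => (⟨Sum.inr b.1,
      Finset.mem_map_of_mem _ b.2⟩ : ↥(B.map (emb2 (V2 := V2))))) := by
    constructor
    · rintro ⟨x, hx⟩ ⟨y, hy⟩ h
      simpa [Subtype.ext_iff] using h
    · rintro ⟨s, hs⟩
      obtain ⟨b, hb, rfl⟩ := Finset.mem_map.1 hs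
      exact ⟨⟨b, hb⟩, rfl⟩
  set e := Equiv.ofBijective _ hf
  rw [← Matrix.det_submatrix_equiv_self e (psub MJ (B.map (emb2 (V2 := V2))))]
  congr 1

lemma feasB (B : Finset V2) (hv : v2 ∉ B) :
    (psub MJ (insert (Sum.inl w0) (B.map (emb2 (V2 := V2))))).det = 0 := by
  apply Matrix.det_eq_zero_of_column_eq_zero
    (⟨Sum.inl w0, Finset.mem_insert_self _ _⟩ : ↥(insert (Sum.inl w0) (B.map (emb2 (V2 := V2)))))
  rintro ⟨(a | b), hi⟩
  · exact MJ_ll M2 v2 a w0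
  · rw [show (psub MJ (insert (Sum.inl w0) (B.map (emb2 (V2 := V2)))))
        ⟨Sum.inr b, hi⟩ ⟨Sum.inl w0, _⟩ = MJ (Sum.inr b) (Sum.inl w0) from rfl,
      MJ_rl]
    have hb : b ∈ B := by
      rcases Finset.mem_insert.1 hi with h | h
      · exact absurd h (by simp)
      · obtain ⟨c, hc, hcb⟩ := Finset.mem_map.1 h
        cases hcb; exact hc
    rw [if_neg (show b ≠ v2 from fun h => hv (h ▸ hb))]

lemma feasC (B : Finset V2) (hv : v2 ∈ B) :
    ((psub MJ (insert (Sum.inl w0) (B.map (emb2 (V2 := V2))))).det = 0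
      ↔ (psub M2 (B.erase v2)).det = 0) := by
  set S : Finset (W1 ⊕ V2) := insert (Sum.inl w0) (B.map (emb2 (V2 := V2))) with hS
  have hmemr : ∀ b : V2, Sum.inr b ∈ S ↔ b ∈ B := by
    intro b
    simp only [hS, Finset.mem_insert, Finset.mem_map]
    constructor
    · rintro (h | ⟨c, hc, hcb⟩)
      · exact absurd h (by simp)
      · cases hcb; exact hc
    · intro hb; exact Or.inr ⟨b, hb, rfl⟩
  have hmeml : ∀ a : W1, Sum.inl a ∈ S := by
    intro a
    have : a = w0 := Subsingleton.elim _ _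
    rw [this]; exact Finset.mem_insert_self _ _
  -- mulVec computation
  have hmv : ∀ (X : (W1 ⊕ V2) → ZMod 2) (i : W1 ⊕ V2),
      (MJ).mulVec X i = MJ i (Sum.inl w0) * X (Sum.inl w0)
        + ∑ b : V2, MJ i (Sum.inr b) * X (Sum.inr b) := by
    intro X i
    rw [Matrix.mulVec, dotProduct, Fintype.sum_sum_type]
    congr 1
    rw [Fintype.sum_unique]
    rfl
  rw [det_psub_eq_zero_iff, det_psub_eq_zero_iff]
  constructor
  · rintro ⟨X, hX0, hXsupp, hXker⟩
    -- X (inr v2) = 0 from row w0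
    have hXv2 : X (Sum.inr v2) = 0 := by
      have h := hXker (Sum.inl w0) (hmeml w0)
      rw [hmv] at h
      rw [MJ_ll] at h
      rw [zero_mul, zero_add] at h
      have hsum : ∑ b : V2, MJ (Sum.inl w0) (Sum.inr b) * X (Sum.inr b) = X (Sum.inr v2) := by
        rw [Finset.sum_eq_single v2]
        · rw [MJ_lr, if_pos rfl, one_mul]
        · intro b _ hb
          rw [MJ_lr, if_neg hb, zero_mul]
        · intro h; exact absurd (Finset.mem_univ v2) h
      rw [hsum] at h
      exact h
    refine ⟨fun b => X (Sum.inr b), ?_, ?_, ?_⟩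
    · intro h
      -- then X is supported on inl w0 only; row v2 gives X w0 = 0
      apply hX0
      have hXw0 : X (Sum.inl w0) = 0 := by
        have h2 := hXker (Sum.inr v2) ((hmemr v2).2 hv)
        rw [hmv] at h2
        rw [MJ_rl, if_pos rfl, one_mul] at h2
        have hsum : ∑ b : V2, MJ (Sum.inr v2) (Sum.inr b) * X (Sum.inr b) = 0 := by
          apply Finset.sum_eq_zero
          intro b _
          rw [show X (Sum.inr b) = 0 from congrFun h b, mul_zero]
        rw [hsum, add_zero] at h2
        exact h2
      funext j
      rcases j with a | b
      · have : a = w0 := Subsingleton.elim _ _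
        rw [this]; exact hXw0
      · exact congrFun h b
    · intro b hb
      by_cases hbv : b = v2
      · subst hbv; exact hXv2
      · apply hXsupp
        intro h
        exact hb (Finset.mem_erase.2 ⟨hbv, (hmemr b).1 h⟩)
    · intro a ha
      have h := hXker (Sum.inr a) ((hmemr a).2 (Finset.mem_of_mem_erase ha))
      rw [hmv] at h
      rw [MJ_rl, if_neg (Finset.mem_erase.1 ha).1, zero_mul, zero_add] at h
      rw [Matrix.mulVec, dotProduct]
      rw [← h]
      exact Finset.sum_congr rfl fun b _ => rfl
  · rintro ⟨x, hx0, hxsupp, hxker⟩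
    refine ⟨fun j => Sum.elim (fun _ => M2.mulVec x v2) x j, ?_, ?_, ?_⟩
    · intro h
      apply hx0
      funext b
      exact congrFun h (Sum.inr b)
    · rintro (a | b) hj
      · exact absurd (hmeml a) hj
      · show x b = 0
        apply hxsupp
        intro hb
        exact hj ((hmemr b).2 (Finset.mem_of_mem_erase hb))
    · rintro (a | b) hi
      · -- row w0 : X (inr v2) = x v2 = 0
        rw [hmv]
        rw [MJ_ll, zero_mul, zero_add]
        rw [Finset.sum_eq_single v2]
        · rw [MJ_lr, if_pos rfl, one_mul]
          exact hxsupp v2 (Finset.notMem_erase _ _)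
        · intro b _ hb
          rw [MJ_lr, if_neg hb, zero_mul]
        · intro h; exact absurd (Finset.mem_univ v2) h
      · by_cases hbv : b = v2
        · rw [hbv]
          rw [hmv, MJ_rl, if_pos rfl, one_mul]
          have hsum : ∑ c : V2, MJ (Sum.inr v2) (Sum.inr c) *
              (Sum.elim (fun _ : W1 => M2.mulVec x v2) x (Sum.inr c)) = M2.mulVec x v2 := by
            rw [Matrix.mulVec, dotProduct]
            exact Finset.sum_congr rfl fun c _ => rfl
          rw [hsum]
          show M2.mulVec x v2 + M2.mulVec x v2 = 0
          exact CharTwo.add_self_eq_zero _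
        · rw [hmv]
          rw [MJ_rl, if_neg hbv, zero_mul, zero_add]
          have hbB : b ∈ B := (hmemr b).1 hi
          have := hxker b (Finset.mem_erase.2 ⟨hbv, hbB⟩)
          rw [Matrix.mulVec, dotProduct] at this
          rw [← this]
          exact Finset.sum_congr rfl fun c _ => rfl

lemma map_symmDiff2 {α β : Type*} [DecidableEq α] [DecidableEq β] (e : α ↪ β)
    (s t : Finset α) : (s ∆ t).map e = (s.map e) ∆ (t.map e) := by
  ext x
  simp only [Finset.mem_map, Finset.mem_symmDiff]
  constructor
  · rintro ⟨a, (⟨h1, h2⟩ | ⟨h1, h2⟩), rfl⟩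
    · exact Or.inl ⟨⟨a, h1, rfl⟩, fun ⟨b, hb, hba⟩ => h2 (e.injective hba ▸ hb)⟩
    · exact Or.inr ⟨⟨a, h1, rfl⟩, fun ⟨b, hb, hba⟩ => h2 (e.injective hba ▸ hb)⟩
  · rintro (⟨⟨a, h1, rfl⟩, h2⟩ | ⟨⟨a, h1, rfl⟩, h2⟩)
    · exact ⟨a, Or.inl ⟨h1, fun h => h2 ⟨a, h, rfl⟩⟩, rfl⟩
    · exact ⟨a, Or.inr ⟨h1, fun h => h2 ⟨a, h, rfl⟩⟩, rfl⟩

lemma card_map_symmDiff {α β : Type*} [DecidableEq α] [DecidableEq β] (e : α ↪ β)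
    (s t : Finset α) : ((s.map e) ∆ (t.map e)).card = (s ∆ t).card := by
  rw [← map_symmDiff2, Finset.card_map]

lemma twistWidth_eq_feas {V : Type*} [Fintype V] [DecidableEq V]
    (M : Matrix V V (ZMod 2)) (A : Finset V) :
    twistWidth M A = sSup {k | ∃ T, (psub M T).det ≠ 0 ∧ (T ∆ A).card = k}
      - sInf {k | ∃ T, (psub M T).det ≠ 0 ∧ (T ∆ A).card = k} := by
  have hset : {k | ∃ S : Finset V, (psub M (symmDiff S A)).det ≠ 0 ∧ S.card = k}
      = {k | ∃ T, (psub M T).det ≠ 0 ∧ (T ∆ A).card = k} := by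
    ext k
    constructor
    · rintro ⟨S, h1, h2⟩
      exact ⟨S ∆ A, h1, by rwa [symmDiff_symmDiff_cancel_right]⟩
    · rintro ⟨T, h1, h2⟩
      exact ⟨T ∆ A, by rwa [symmDiff_symmDiff_cancel_right], h2⟩
  rw [twistWidth, sysWidth, hset]

lemma det_psub_empty {V : Type*} [DecidableEq V] (M : Matrix V V (ZMod 2)) :
    (psub M (∅ : Finset V)).det ≠ 0 := by
  rw [Matrix.det_isEmpty]
  exact one_ne_zero

noncomputable def prei {V2 : Type*} [DecidableEq V2] (T : Finset (W1 ⊕ V2)) : Finset V2 :=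
  T.preimage Sum.inr (Sum.inr_injective.injOn)

lemma mem_prei {V2 : Type*} [DecidableEq V2] (T : Finset (W1 ⊕ V2)) (b : V2) :
    b ∈ prei T ↔ Sum.inr b ∈ T := Finset.mem_preimage

lemma prei_map {V2 : Type*} [DecidableEq V2] (B : Finset V2) :
    prei (B.map (emb2 (V2 := V2))) = B := by
  ext b
  rw [mem_prei, Finset.mem_map]
  constructor
  · rintro ⟨c, hc, hcb⟩
    cases hcb; exact hc
  · intro hb; exact ⟨b, hb, rfl⟩

lemma T_decomp {V2 : Type*} [DecidableEq V2] (T : Finset (W1 ⊕ V2)) :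
    (Sum.inl w0 ∉ T ∧ T = (prei T).map (emb2 (V2 := V2))) ∨
    (Sum.inl w0 ∈ T ∧ T = insert (Sum.inl w0) ((prei T).map (emb2 (V2 := V2)))) := by
  have key : ∀ x ∈ T, x ≠ Sum.inl w0 → x ∈ (prei T).map (emb2 (V2 := V2)) := by
    rintro (a | b) hx hxne
    · exact absurd (congrArg Sum.inl (Subsingleton.elim a w0)) hxne
    · exact Finset.mem_map.2 ⟨b, (mem_prei T b).2 hx, rfl⟩
  have sub : ∀ x ∈ (prei T).map (emb2 (V2 := V2)), x ∈ T := by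
    intro x hx
    obtain ⟨b, hb, rfl⟩ := Finset.mem_map.1 hx
    exact (mem_prei T b).1 hb
  by_cases hw : Sum.inl w0 ∈ T
  · refine Or.inr ⟨hw, ?_⟩
    ext x
    rw [Finset.mem_insert]
    constructor
    · intro hx
      by_cases hxw : x = Sum.inl w0
      · exact Or.inl hxw
      · exact Or.inr (key x hx hxw)
    · rintro (rfl | hx)
      · exact hw
      · exact sub x hx
  · refine Or.inl ⟨hw, ?_⟩
    ext x
    constructor
    · intro hx
      exact key x hx (fun h => hw (h ▸ hx))
    · exact sub x

lemma prei_insert_wS {V2 : Type*} [DecidableEq V2] (B : Finset V2) :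
    prei (insert (Sum.inl w0) (B.map (emb2 (V2 := V2)))) = B := by
  ext b
  rw [mem_prei, Finset.mem_insert]
  constructor
  · rintro (h | h)
    · exact absurd h (by simp)
    · obtain ⟨c, hc, hcb⟩ := Finset.mem_map.1 h
      cases hcb; exact hc
  · intro hb; exact Or.inr (Finset.mem_map.2 ⟨b, hb, rfl⟩)

lemma wS_not_mem_map {V2 : Type*} [DecidableEq V2] (B : Finset V2) :
    Sum.inl w0 ∉ B.map (emb2 (V2 := V2)) := by
  intro h
  obtain ⟨c, _, hcb⟩ := Finset.mem_map.1 h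
  exact Sum.inr_ne_inl hcb

lemma feasJ_iff (T : Finset (W1 ⊕ V2)) :
    (psub MJ T).det ≠ 0 ↔
      ((Sum.inl w0 ∉ T ∧ (psub M2 (prei T)).det ≠ 0) ∨
       (Sum.inl w0 ∈ T ∧ v2 ∈ prei T ∧ (psub M2 ((prei T).erase v2)).det ≠ 0)) := by
  rcases T_decomp T with ⟨hw, hT⟩ | ⟨hw, hT⟩
  · constructor
    · intro h
      refine Or.inl ⟨hw, ?_⟩
      rw [hT, feasA] at h
      exact h
    · rintro (⟨_, h⟩ | ⟨hw', _⟩)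
      · rw [hT, feasA]; exact h
      · exact absurd hw' hw
  · by_cases hv : v2 ∈ prei T
    · constructor
      · intro h
        refine Or.inr ⟨hw, hv, ?_⟩
        intro h0
        apply h
        rw [hT]
        exact (feasC M2 v2 (prei T) hv).2 h0
      · rintro (⟨hw', _⟩ | ⟨_, _, h⟩)
        · exact absurd hw hw'
        · intro h0
          rw [hT] at h0
          exact h ((feasC M2 v2 (prei T) hv).1 h0)
    · constructor
      · intro h
        exfalso
        apply h
        rw [hT]
        exact feasB M2 v2 (prei T) hv
      · rintro (⟨hw', _⟩ | ⟨_, hv', _⟩)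
        · exact absurd hw hw'
        · exact absurd hv' hv

def KOs (C : Finset V2) : Set ℕ :=
  {k | ∃ F, v2 ∉ F ∧ (psub M2 F).det ≠ 0 ∧ (F ∆ C).card = k}

def KIs (C : Finset V2) : Set ℕ :=
  {k | ∃ F, v2 ∈ F ∧ (psub M2 F).det ≠ 0 ∧ (F ∆ C).card = k}

lemma KOs_nonempty (C : Finset V2) : (KOs M2 v2 C).Nonempty :=
  ⟨C.card, ∅, Finset.notMem_empty v2, det_psub_empty M2, by rw [← Finset.bot_eq_empty, bot_symmDiff]⟩

lemma KOs_bdd (C : Finset V2) : BddAbove (KOs M2 v2 C) := by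
  refine ⟨Fintype.card V2, ?_⟩
  rintro k ⟨F, _, _, rfl⟩
  exact le_trans (Finset.card_le_card (Finset.subset_univ _)) (le_of_eq (Finset.card_univ))

lemma KIs_bdd (C : Finset V2) : BddAbove (KIs M2 v2 C) := by
  refine ⟨Fintype.card V2, ?_⟩
  rintro k ⟨F, _, _, rfl⟩
  exact le_trans (Finset.card_le_card (Finset.subset_univ _)) (le_of_eq (Finset.card_univ))

lemma KK2s_eq (C : Finset V2) :
    {k | ∃ F, (psub M2 F).det ≠ 0 ∧ (F ∆ C).card = k} = KOs M2 v2 C ∪ KIs M2 v2 C := by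
  ext k
  constructor
  · rintro ⟨F, h1, h2⟩
    by_cases hv : v2 ∈ F
    · exact Or.inr ⟨F, hv, h1, h2⟩
    · exact Or.inl ⟨F, hv, h1, h2⟩
  · rintro (⟨F, _, h1, h2⟩ | ⟨F, _, h1, h2⟩) <;> exact ⟨F, h1, h2⟩

lemma hex_KIs (hM2 : M2.IsSymm) {C : Finset V2} (hC : v2 ∉ C) :
    ∀ k ∈ KIs M2 v2 C, ∃ j ∈ KOs M2 v2 C, j ≤ k ∧ k ≤ j + 2 := by
  rintro k ⟨F, hv, hdet, rfl⟩
  obtain ⟨F', hvF', hdet', h1, h2⟩ := exchange M2 hM2 hv hC hdet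
  exact ⟨(F' ∆ C).card, ⟨F', hvF', hdet', rfl⟩, h1, h2⟩

-- widths of the twists of the join
lemma width_J_main {C : Finset V2} (hM2 : M2.IsSymm) (hC : v2 ∉ C)
    (A : Finset (W1 ⊕ V2))
    (hA : {k | ∃ T, (psub MJ T).det ≠ 0 ∧ (T ∆ A).card = k}
       = KOs M2 v2 C ∪ KIs M2 v2 C ∪ ((· + 2) '' KOs M2 v2 C)) :
    twistWidth MJ A = (sSup (KOs M2 v2 C) - sInf (KOs M2 v2 C)) + 2 := by
  rw [twistWidth_eq_feas, hA]
  exact width_union_calc _ _ (KOs_nonempty M2 v2 C) (KOs_bdd M2 v2 C) (KIs_bdd M2 v2 C)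
    (hex_KIs M2 v2 hM2 hC)

lemma size1 (F B : Finset V2) :
    ((F.map (emb2 (V2 := V2))) ∆ (B.map (emb2 (V2 := V2)))).card = (F ∆ B).card :=
  card_map_symmDiff _ _ _

lemma size2 (F B : Finset V2) :
    ((insert (Sum.inl w0) (F.map (emb2 (V2 := V2)))) ∆ (B.map (emb2 (V2 := V2)))).card
      = (F ∆ B).card + 1 := by
  rw [card_insert_symmDiff (wS_not_mem_map F) (wS_not_mem_map B), size1]

lemma size3 (F B : Finset V2) :
    ((F.map (emb2 (V2 := V2))) ∆ (insert (Sum.inl w0) (B.map (emb2 (V2 := V2))))).card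
      = (F ∆ B).card + 1 := by
  rw [symmDiff_comm, card_insert_symmDiff (wS_not_mem_map B) (wS_not_mem_map F), size1,
    symmDiff_comm]

lemma size4 (F B : Finset V2) :
    ((insert (Sum.inl w0) (F.map (emb2 (V2 := V2))))
      ∆ (insert (Sum.inl w0) (B.map (emb2 (V2 := V2))))).card = (F ∆ B).card := by
  rw [symmDiff_insert_insert (wS_not_mem_map F) (wS_not_mem_map B), size1]

lemma size5 {F C : Finset V2} (hv : v2 ∈ F) (hC : v2 ∉ C) :
    (F ∆ (insert v2 C)).card = ((F.erase v2) ∆ C).card := by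
  rw [erase_symmDiff_erase hv (Finset.mem_insert_self v2 C), Finset.erase_insert hC]

lemma size6 {F C : Finset V2} (hv : v2 ∉ F) (hC : v2 ∉ C) :
    (F ∆ (insert v2 C)).card = (F ∆ C).card + 1 := by
  rw [symmDiff_comm, card_insert_symmDiff hC hv, symmDiff_comm]

lemma KKJ_case1 {C : Finset V2} (hC : v2 ∉ C) :
    {k | ∃ T, (psub MJ T).det ≠ 0 ∧ (T ∆ (C.map (emb2 (V2 := V2)))).card = k}
      = KOs M2 v2 C ∪ KIs M2 v2 C ∪ ((· + 2) '' KOs M2 v2 C) := by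
  ext k
  simp only [Set.mem_setOf_eq, Set.mem_union, Set.mem_image]
  constructor
  · rintro ⟨T, hfeas, rfl⟩
    rcases (feasJ_iff M2 v2 T).1 hfeas with ⟨hw, hdet⟩ | ⟨hw, hv, hdet⟩
    · have hT : T = (prei T).map (emb2 (V2 := V2)) := by
        rcases T_decomp T with ⟨_, h⟩ | ⟨hw', _⟩
        · exact h
        · exact absurd hw' hw
      refine Or.inl ?_
      by_cases hvT : v2 ∈ prei T
      · exact Or.inr ⟨prei T, hvT, hdet, by conv_rhs => rw [hT, size1]⟩
      · exact Or.inl ⟨prei T, hvT, hdet, by conv_rhs => rw [hT, size1]⟩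
    · have hT : T = insert (Sum.inl w0) ((prei T).map (emb2 (V2 := V2))) := by
        rcases T_decomp T with ⟨hw', _⟩ | ⟨_, h⟩
        · exact absurd hw hw'
        · exact h
      refine Or.inr ⟨(((prei T).erase v2) ∆ C).card,
        ⟨(prei T).erase v2, Finset.notMem_erase _ _, hdet, rfl⟩, ?_⟩
      conv_rhs => rw [hT, size2]
      rw [card_symmDiff_erase hv hC]
  · rintro ((⟨F, hvF, hdet, rfl⟩ | ⟨F, hvF, hdet, rfl⟩) | ⟨m, ⟨F, hvF, hdet, rfl⟩, rfl⟩)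
    · refine ⟨F.map (emb2 (V2 := V2)), ?_, by rw [size1]⟩
      exact (feasJ_iff M2 v2 _).2 (Or.inl ⟨wS_not_mem_map F, by rwa [prei_map]⟩)
    · refine ⟨F.map (emb2 (V2 := V2)), ?_, by rw [size1]⟩
      exact (feasJ_iff M2 v2 _).2 (Or.inl ⟨wS_not_mem_map F, by rwa [prei_map]⟩)
    · refine ⟨insert (Sum.inl w0) ((insert v2 F).map (emb2 (V2 := V2))), ?_, ?_⟩
      · refine (feasJ_iff M2 v2 _).2 (Or.inr ⟨Finset.mem_insert_self _ _, ?_, ?_⟩)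
        · rw [prei_insert_wS]; exact Finset.mem_insert_self _ _
        · rw [prei_insert_wS, Finset.erase_insert hvF]; exact hdet
      · rw [size2, card_insert_symmDiff hvF hC]

lemma KKJ_case2 {C : Finset V2} (hC : v2 ∉ C) :
    {k | ∃ T, (psub MJ T).det ≠ 0 ∧
        (T ∆ (insert (Sum.inl w0) (C.map (emb2 (V2 := V2))))).card = k}
      = (· + 1) '' {k | ∃ F, (psub M2 F).det ≠ 0 ∧ (F ∆ C).card = k} := by
  ext k
  simp only [Set.mem_setOf_eq, Set.mem_image]
  constructor
  · rintro ⟨T, hfeas, rfl⟩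
    rcases (feasJ_iff M2 v2 T).1 hfeas with ⟨hw, hdet⟩ | ⟨hw, hv, hdet⟩
    · have hT : T = (prei T).map (emb2 (V2 := V2)) := by
        rcases T_decomp T with ⟨_, h⟩ | ⟨hw', _⟩
        · exact h
        · exact absurd hw' hw
      exact ⟨((prei T) ∆ C).card, ⟨prei T, hdet, rfl⟩, by conv_rhs => rw [hT, size3]⟩
    · have hT : T = insert (Sum.inl w0) ((prei T).map (emb2 (V2 := V2))) := by
        rcases T_decomp T with ⟨hw', _⟩ | ⟨_, h⟩
        · exact absurd hw hw'
        · exact h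
      refine ⟨(((prei T).erase v2) ∆ C).card, ⟨(prei T).erase v2, hdet, rfl⟩, ?_⟩
      conv_rhs => rw [hT, size4]
      rw [card_symmDiff_erase hv hC]
  · rintro ⟨m, ⟨F, hdet, rfl⟩, rfl⟩
    refine ⟨F.map (emb2 (V2 := V2)), ?_, by rw [size3]⟩
    exact (feasJ_iff M2 v2 _).2 (Or.inl ⟨wS_not_mem_map F, by rwa [prei_map]⟩)

lemma KKJ_case3 {C : Finset V2} (hC : v2 ∉ C) :
    {k | ∃ T, (psub MJ T).det ≠ 0 ∧
        (T ∆ ((insert v2 C).map (emb2 (V2 := V2)))).card = k}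
      = {k | ∃ F, (psub M2 F).det ≠ 0 ∧ (F ∆ (insert v2 C)).card = k} := by
  ext k
  simp only [Set.mem_setOf_eq]
  constructor
  · rintro ⟨T, hfeas, rfl⟩
    rcases (feasJ_iff M2 v2 T).1 hfeas with ⟨hw, hdet⟩ | ⟨hw, hv, hdet⟩
    · have hT : T = (prei T).map (emb2 (V2 := V2)) := by
        rcases T_decomp T with ⟨_, h⟩ | ⟨hw', _⟩
        · exact h
        · exact absurd hw' hw
      exact ⟨prei T, hdet, by conv_rhs => rw [hT, size1]⟩
    · have hT : T = insert (Sum.inl w0) ((prei T).map (emb2 (V2 := V2))) := by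
        rcases T_decomp T with ⟨hw', _⟩ | ⟨_, h⟩
        · exact absurd hw hw'
        · exact h
      refine ⟨(prei T).erase v2, hdet, ?_⟩
      rw [size6 v2 (Finset.notMem_erase _ _) hC]
      conv_rhs => rw [hT, size2]
      rw [size5 v2 hv hC]
  · rintro ⟨F, hdet, rfl⟩
    refine ⟨F.map (emb2 (V2 := V2)), ?_, by rw [size1]⟩
    exact (feasJ_iff M2 v2 _).2 (Or.inl ⟨wS_not_mem_map F, by rwa [prei_map]⟩)

lemma KKJ_case4 {C : Finset V2} (hC : v2 ∉ C) :
    {k | ∃ T, (psub MJ T).det ≠ 0 ∧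
        (T ∆ (insert (Sum.inl w0) ((insert v2 C).map (emb2 (V2 := V2))))).card = k}
      = KOs M2 v2 C ∪ KIs M2 v2 C ∪ ((· + 2) '' KOs M2 v2 C) := by
  ext k
  simp only [Set.mem_setOf_eq, Set.mem_union, Set.mem_image]
  constructor
  · rintro ⟨T, hfeas, rfl⟩
    rcases (feasJ_iff M2 v2 T).1 hfeas with ⟨hw, hdet⟩ | ⟨hw, hv, hdet⟩
    · have hT : T = (prei T).map (emb2 (V2 := V2)) := by
        rcases T_decomp T with ⟨_, h⟩ | ⟨hw', _⟩
        · exact h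
        · exact absurd hw' hw
      by_cases hvT : v2 ∈ prei T
      · refine Or.inl (Or.inr ⟨prei T, hvT, hdet, ?_⟩)
        rw [card_symmDiff_erase hvT hC]
        conv_rhs => rw [hT, size3]
        rw [size5 v2 hvT hC]
      · refine Or.inr ⟨((prei T) ∆ C).card, ⟨prei T, hvT, hdet, rfl⟩, ?_⟩
        conv_rhs => rw [hT, size3]
        rw [size6 v2 hvT hC]
    · have hT : T = insert (Sum.inl w0) ((prei T).map (emb2 (V2 := V2))) := by
        rcases T_decomp T with ⟨hw', _⟩ | ⟨_, h⟩
        · exact absurd hw hw'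
        · exact h
      refine Or.inl (Or.inl ⟨(prei T).erase v2, Finset.notMem_erase _ _, hdet, ?_⟩)
      conv_rhs => rw [hT, size4]
      rw [size5 v2 hv hC]
  · rintro ((⟨F, hvF, hdet, rfl⟩ | ⟨F, hvF, hdet, rfl⟩) | ⟨m, ⟨F, hvF, hdet, rfl⟩, rfl⟩)
    · refine ⟨insert (Sum.inl w0) ((insert v2 F).map (emb2 (V2 := V2))), ?_, ?_⟩
      · refine (feasJ_iff M2 v2 _).2 (Or.inr ⟨Finset.mem_insert_self _ _, ?_, ?_⟩)
        · rw [prei_insert_wS]; exact Finset.mem_insert_self _ _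
        · rw [prei_insert_wS, Finset.erase_insert hvF]; exact hdet
      · rw [size4, symmDiff_insert_insert hvF hC]
    · refine ⟨F.map (emb2 (V2 := V2)), ?_, ?_⟩
      · exact (feasJ_iff M2 v2 _).2 (Or.inl ⟨wS_not_mem_map F, by rwa [prei_map]⟩)
      · rw [size3, size5 v2 hvF hC, ← card_symmDiff_erase hvF hC]
    · refine ⟨F.map (emb2 (V2 := V2)), ?_, ?_⟩
      · exact (feasJ_iff M2 v2 _).2 (Or.inl ⟨wS_not_mem_map F, by rwa [prei_map]⟩)
      · rw [size3, size6 v2 hvF hC]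

lemma KK2s_nonempty (C : Finset V2) :
    (KOs M2 v2 C ∪ KIs M2 v2 C).Nonempty := by
  obtain ⟨k, hk⟩ := KOs_nonempty M2 v2 C
  exact ⟨k, Or.inl hk⟩

lemma KK2s_bdd (C : Finset V2) :
    BddAbove (KOs M2 v2 C ∪ KIs M2 v2 C) :=
  BddAbove.union (KOs_bdd M2 v2 C) (KIs_bdd M2 v2 C)

lemma tw_case1 (hM2 : M2.IsSymm) {C : Finset V2} (hC : v2 ∉ C) :
    twistWidth MJ (C.map (emb2 (V2 := V2)))
      = (sSup (KOs M2 v2 C) - sInf (KOs M2 v2 C)) + 2 :=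
  width_J_main M2 v2 hM2 hC _ (KKJ_case1 M2 v2 hC)

lemma tw_case4 (hM2 : M2.IsSymm) {C : Finset V2} (hC : v2 ∉ C) :
    twistWidth MJ (insert (Sum.inl w0) ((insert v2 C).map (emb2 (V2 := V2))))
      = (sSup (KOs M2 v2 C) - sInf (KOs M2 v2 C)) + 2 :=
  width_J_main M2 v2 hM2 hC _ (KKJ_case4 M2 v2 hC)

lemma tw_case2 {C : Finset V2} (hC : v2 ∉ C) :
    twistWidth MJ (insert (Sum.inl w0) (C.map (emb2 (V2 := V2)))) = twistWidth M2 C := by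
  rw [twistWidth_eq_feas, KKJ_case2 M2 v2 hC, KK2s_eq M2 v2 C,
    nat_sSup_shift _ (KK2s_nonempty M2 v2 C) (KK2s_bdd M2 v2 C) 1,
    nat_sInf_shift _ (KK2s_nonempty M2 v2 C) 1, twistWidth_eq_feas, KK2s_eq M2 v2 C]
  omega

lemma tw_case3 {C : Finset V2} (hC : v2 ∉ C) :
    twistWidth MJ ((insert v2 C).map (emb2 (V2 := V2))) = twistWidth M2 (insert v2 C) := by
  rw [twistWidth_eq_feas, KKJ_case3 M2 v2 hC, ← twistWidth_eq_feas]

lemma feasV (T' : Finset {u : V2 // u ≠ v2}) :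
    (psub (vdel M2 v2) T').det
      = (psub M2 (T'.map (Function.Embedding.subtype _))).det := by
  have hf : Function.Bijective (fun b : ↥T' =>
      (⟨(b.1 : V2), Finset.mem_map_of_mem _ b.2⟩ :
        ↥(T'.map (Function.Embedding.subtype (fun u : V2 => u ≠ v2))))) := by
    constructor
    · rintro ⟨x, hx⟩ ⟨y, hy⟩ h
      simp only [Subtype.mk.injEq] at h
      exact Subtype.ext (Subtype.ext (Subtype.mk.inj h))
    · rintro ⟨s, hs⟩
      obtain ⟨b, hb, rfl⟩ := Finset.mem_map.1 hs
      exact ⟨⟨b, hb⟩, rfl⟩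
  set e := Equiv.ofBijective _ hf
  rw [← Matrix.det_submatrix_equiv_self e (psub M2 (T'.map (Function.Embedding.subtype _)))]
  congr 1

lemma subtype_symmDiff_card {C : Finset V2} (hC : v2 ∉ C) (T' : Finset {u : V2 // u ≠ v2}) :
    (T' ∆ (C.subtype (· ≠ v2))).card
      = ((T'.map (Function.Embedding.subtype _)) ∆ C).card := by
  have h1 : C = (C.subtype (· ≠ v2)).map (Function.Embedding.subtype _) :=
    (Finset.subtype_map_of_mem (fun x hx => ne_of_mem_of_not_mem hx hC)).symm
  conv_rhs => rw [h1, card_map_symmDiff]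

lemma tw_vdel {C : Finset V2} (hC : v2 ∉ C) :
    twistWidth (vdel M2 v2) (C.subtype (· ≠ v2))
      = sSup (KOs M2 v2 C) - sInf (KOs M2 v2 C) := by
  rw [twistWidth_eq_feas]
  have hset : {k | ∃ T', (psub (vdel M2 v2) T').det ≠ 0 ∧
      (T' ∆ (C.subtype (· ≠ v2))).card = k} = KOs M2 v2 C := by
    ext k
    simp only [Set.mem_setOf_eq]
    constructor
    · rintro ⟨T', hdet, rfl⟩
      refine ⟨T'.map (Function.Embedding.subtype _), ?_, ?_, ?_⟩
      · intro h
        obtain ⟨b, _, hb⟩ := Finset.mem_map.1 h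
        exact b.2 hb
      · rwa [feasV] at hdet
      · exact (subtype_symmDiff_card v2 hC T').symm
    · rintro ⟨F, hvF, hdet, rfl⟩
      have hFmap : (F.subtype (· ≠ v2)).map (Function.Embedding.subtype _) = F :=
        Finset.subtype_map_of_mem (fun x hx => ne_of_mem_of_not_mem hx hvF)
      refine ⟨F.subtype (· ≠ v2), ?_, ?_⟩
      · rw [feasV, hFmap]; exact hdet
      · rw [subtype_symmDiff_card v2 hC, hFmap]
  rw [hset]

lemma sum_powerset_inr {M : Type*} [AddCommMonoid M] (h : Finset (W1 ⊕ V2) → M) :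
    ∑ A ∈ ((Finset.univ : Finset (W1 ⊕ V2)).erase (Sum.inl w0)).powerset, h A
      = ∑ B : Finset V2, h (B.map (emb2 (V2 := V2))) := by
  apply Finset.sum_nbij' (fun A => prei A) (fun B => B.map (emb2 (V2 := V2)))
  · intro A _; exact Finset.mem_univ _
  · intro B _
    rw [Finset.mem_powerset]
    intro x hx
    obtain ⟨b, _, rfl⟩ := Finset.mem_map.1 hx
    refine Finset.mem_erase.2 ⟨?_, Finset.mem_univ _⟩
    simp [emb2]
  · intro A hA
    have hw : Sum.inl w0 ∉ A := fun h =>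
      (Finset.mem_erase.1 (Finset.mem_powerset.1 hA h)).1 rfl
    rcases T_decomp A with ⟨_, h⟩ | ⟨hw', _⟩
    · exact h.symm
    · exact absurd hw' hw
  · intro B _; exact prei_map B
  · intro A hA
    have hw : Sum.inl w0 ∉ A := fun h =>
      (Finset.mem_erase.1 (Finset.mem_powerset.1 hA h)).1 rfl
    rcases T_decomp A with ⟨_, h⟩ | ⟨hw', _⟩
    · exact congrArg _ h
    · exact absurd hw' hw

lemma map_subtype_inv {V : Type*} [DecidableEq V] (v : V) (B : Finset {u : V // u ≠ v}) :
    (B.map (Function.Embedding.subtype _)).subtype (· ≠ v) = B := by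
  ext b
  simp only [Finset.mem_subtype, Finset.mem_map, Function.Embedding.coe_subtype]
  constructor
  · rintro ⟨a, ha, hab⟩
    rwa [← Subtype.ext hab]
  · intro hb
    exact ⟨b, hb, rfl⟩

lemma bracket_eq (hM2 : M2.IsSymm) (B : Finset V2) :
    (X : Polynomial ℤ) ^ twistWidth MJ (B.map (emb2 (V2 := V2)))
        + (X : Polynomial ℤ) ^ twistWidth MJ (insert (Sum.inl w0) (B.map (emb2 (V2 := V2))))
      = (X : Polynomial ℤ) ^ twistWidth M2 B
        + (X : Polynomial ℤ) ^ ((sSup (KOs M2 v2 (B.erase v2))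
            - sInf (KOs M2 v2 (B.erase v2))) + 2) := by
  by_cases hv : v2 ∈ B
  · have hC : v2 ∉ B.erase v2 := Finset.notMem_erase _ _
    have hB : B = insert v2 (B.erase v2) := (Finset.insert_erase hv).symm
    have h1 : twistWidth MJ (B.map (emb2 (V2 := V2))) = twistWidth M2 B := by
      conv_lhs => rw [hB]
      rw [tw_case3 M2 v2 hC, ← hB]
    have h2 : twistWidth MJ (insert (Sum.inl w0) (B.map (emb2 (V2 := V2))))
        = (sSup (KOs M2 v2 (B.erase v2)) - sInf (KOs M2 v2 (B.erase v2))) + 2 := by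
      conv_lhs => rw [hB]
      exact tw_case4 M2 v2 hM2 hC
    rw [h1, h2]
  · have hB : B.erase v2 = B := Finset.erase_eq_of_notMem hv
    have h1 : twistWidth MJ (B.map (emb2 (V2 := V2)))
        = (sSup (KOs M2 v2 (B.erase v2)) - sInf (KOs M2 v2 (B.erase v2))) + 2 := by
      rw [hB]
      exact tw_case1 M2 v2 hM2 hv
    have h2 : twistWidth MJ (insert (Sum.inl w0) (B.map (emb2 (V2 := V2))))
        = twistWidth M2 B := tw_case2 M2 v2 hv
    rw [h1, h2, add_comm]

end Join

/-- Proposition 4.2(a): if `G1` consists of two vertices `w` (unlooped) and `v1` joined by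
an edge (`v1` having the same loop status as `v2`), then
`T_{(G1,v1)∨(G2,v2)} = T_{G2} + 2z²·T_{G2−v2}`.  Here `G1` has adjacency matrix
`!![0, 1; 1, M2 v2 v2]` with `w` the vertex `0` and `v1` the vertex `1`. -/
theorem twistPoly_join_unlooped_leaf
    {V2 : Type*} [Fintype V2] [DecidableEq V2]
    (M2 : Matrix V2 V2 (ZMod 2)) (hM2 : M2.IsSymm) (v2 : V2) :
    twistPoly (onePointJoin !![0, 1; 1, M2 v2 v2] (1 : Fin 2) M2 v2)
      = twistPoly M2 + 2 * X ^ 2 * twistPoly (vdel M2 v2) := by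
  classical
  have hstep1 : twistPoly (onePointJoin !![0, 1; 1, M2 v2 v2] (1 : Fin 2) M2 v2)
      = ∑ B : Finset V2,
        ((X : Polynomial ℤ) ^ twistWidth (onePointJoin !![0, 1; 1, M2 v2 v2] (1 : Fin 2) M2 v2)
            (B.map (emb2 (V2 := V2)))
          + (X : Polynomial ℤ) ^ twistWidth (onePointJoin !![0, 1; 1, M2 v2 v2] (1 : Fin 2) M2 v2)
            (insert (Sum.inl w0) (B.map (emb2 (V2 := V2))))) := by
    rw [twistPoly, sum_split_finset (Sum.inl w0)]
    exact sum_powerset_inr _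
  rw [hstep1]
  have hstep2 : ∀ B : Finset V2,
      ((X : Polynomial ℤ) ^ twistWidth (onePointJoin !![0, 1; 1, M2 v2 v2] (1 : Fin 2) M2 v2)
          (B.map (emb2 (V2 := V2)))
        + (X : Polynomial ℤ) ^ twistWidth (onePointJoin !![0, 1; 1, M2 v2 v2] (1 : Fin 2) M2 v2)
          (insert (Sum.inl w0) (B.map (emb2 (V2 := V2)))))
      = (X : Polynomial ℤ) ^ twistWidth M2 B
        + (X : Polynomial ℤ) ^ ((sSup (KOs M2 v2 (B.erase v2))
            - sInf (KOs M2 v2 (B.erase v2))) + 2) := fun B => bracket_eq M2 v2 hM2 B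
  rw [Finset.sum_congr rfl (fun B _ => hstep2 B), Finset.sum_add_distrib]
  have hstep3 : ∑ B : Finset V2, (X : Polynomial ℤ) ^ ((sSup (KOs M2 v2 (B.erase v2))
      - sInf (KOs M2 v2 (B.erase v2))) + 2)
      = 2 * X ^ 2 * twistPoly (vdel M2 v2) := by
    rw [sum_split_finset v2]
    have hsplit : ∀ C ∈ ((Finset.univ : Finset V2).erase v2).powerset,
        ((X : Polynomial ℤ) ^ ((sSup (KOs M2 v2 (C.erase v2))
            - sInf (KOs M2 v2 (C.erase v2))) + 2)
          + (X : Polynomial ℤ) ^ ((sSup (KOs M2 v2 ((insert v2 C).erase v2))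
            - sInf (KOs M2 v2 ((insert v2 C).erase v2))) + 2))
        = 2 * ((X : Polynomial ℤ)
            ^ (twistWidth (vdel M2 v2) (C.subtype (· ≠ v2)) + 2)) := by
      intro C hC
      have hvC : v2 ∉ C := fun h =>
        (Finset.mem_erase.1 (Finset.mem_powerset.1 hC h)).1 rfl
      rw [Finset.erase_insert hvC, Finset.erase_eq_of_notMem hvC, tw_vdel M2 v2 hvC,
        two_mul]
    rw [Finset.sum_congr rfl hsplit]
    rw [← Finset.mul_sum]
    rw [sum_powerset_subtype v2 (fun A =>
      (X : Polynomial ℤ) ^ (twistWidth (vdel M2 v2) (A.subtype (· ≠ v2)) + 2))]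
    have hmap : ∀ B' : Finset {u : V2 // u ≠ v2},
        (X : Polynomial ℤ) ^ (twistWidth (vdel M2 v2)
            (((B'.map (Function.Embedding.subtype _)).subtype (· ≠ v2))) + 2)
        = X ^ 2 * X ^ (twistWidth (vdel M2 v2) B') := by
      intro B'
      rw [map_subtype_inv, pow_add, mul_comm]
    rw [Finset.sum_congr rfl (fun B' _ => hmap B'), ← Finset.mul_sum, twistPoly]
    ring
  rw [hstep3]
  rfl
end

section
/- Let G1 be the looped simple graph with exactly two vertices w and v1 connected by an edge, where w is looped. Let G2 be any looped simple graph with a vertex v2 having the same loop status as v1. Then T_{(G1,v1)∨(G2,v2)}(z) = z·T_{G2}(z) + z·T_{G2+v2}(z). -/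
open Matrix Polynomial

open scoped symmDiff

set_option linter.unusedSectionVars false
set_option linter.unusedVariables false

namespace TP

def insEquiv {V : Type*} [DecidableEq V] (x : V) (T : Finset V) (hx : x ∉ T) :
    Unit ⊕ ↥T ≃ ↥(insert x T) where
  toFun := Sum.elim (fun _ => ⟨x, Finset.mem_insert_self x T⟩)
    (fun i => ⟨i.1, Finset.mem_insert_of_mem i.2⟩)
  invFun y := if h : y.1 ∈ T then Sum.inr ⟨y.1, h⟩ else Sum.inl ()
  left_inv := by
    rintro (⟨⟩ | ⟨i, hi⟩) <;> simp [hx, *]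
  right_inv := by
    rintro ⟨y, hy⟩
    by_cases h : y ∈ T
    · simp [h]
    · rcases Finset.mem_insert.mp hy with rfl | h'
      · simp [h]
      · exact absurd h' h

lemma det_psub_insert {R V : Type*} [CommRing R] [DecidableEq V] (N : Matrix V V R)
    (x : V) (T : Finset V) (hx : x ∉ T) :
    (psub N (insert x T)).det =
      (Matrix.fromBlocks (Matrix.of fun _ _ => N x x) (Matrix.of fun _ j => N x j.1)
        (Matrix.of fun i _ => N i.1 x) (psub N T) : Matrix (Unit ⊕ ↥T) (Unit ⊕ ↥T) R).det := by
  rw [← Matrix.det_submatrix_equiv_self (insEquiv x T hx) (psub N (insert x T))]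
  congr 1
  ext i j
  rcases i with i | i <;> rcases j with j | j <;> rfl

lemma det_psub_empty {V R : Type*} [DecidableEq V] [CommRing R] (N : Matrix V V R) : (psub N ∅).det = 1 := by
  haveI : IsEmpty ↥(∅ : Finset V) := ⟨fun x => absurd x.2 (Finset.notMem_empty x.1)⟩
  exact Matrix.det_isEmpty

lemma psub_lcomp_not_mem {V : Type*} [DecidableEq V] (N : Matrix V V (ZMod 2)) (v : V) (T : Finset V) (hv : v ∉ T) :
    psub (lcomp N v) T = psub N T := by
  ext i j
  have hi : v ≠ i.1 := fun h => hv (h ▸ i.2)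
  simp [psub, lcomp, Matrix.single, hi]

lemma lcomp_lcomp {V : Type*} [DecidableEq V] (N : Matrix V V (ZMod 2)) (v : V) : lcomp (lcomp N v) v = N := by
  ext i j
  by_cases h : v = i ∧ v = j
  · obtain ⟨rfl, rfl⟩ := h
    simp [lcomp, Matrix.single, add_assoc, show (1 : ZMod 2) + 1 = 0 by decide]
  · simp [lcomp, Matrix.single, h]

lemma det_psub_lcomp_insert {V : Type*} [DecidableEq V] (N : Matrix V V (ZMod 2)) (v : V) (T : Finset V) (hx : v ∉ T) :
    (psub (lcomp N v) (insert v T)).det = (psub N (insert v T)).det + (psub N T).det := by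
  rw [det_psub_insert _ _ _ hx, det_psub_insert _ _ _ hx]
  have hB : (Matrix.of fun (_ : Unit) (j : ↥T) => (lcomp N v) v j.1)
      = (Matrix.of fun _ j => N v j.1) := by
    ext u j
    have hj : v ≠ j.1 := fun h => hx (h ▸ j.2)
    simp [lcomp, Matrix.single, hj]
  have hC : (Matrix.of fun (i : ↥T) (_ : Unit) => (lcomp N v) i.1 v)
      = (Matrix.of fun i _ => N i.1 v) := by
    ext i u
    have hi : v ≠ i.1 := fun h => hx (h ▸ i.2)
    simp [lcomp, Matrix.single, hi]
  rw [hB, hC, psub_lcomp_not_mem N v T hx]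
  have hA : (Matrix.of fun (_ : Unit) (_ : Unit) => (lcomp N v) v v)
      = (Matrix.of fun _ _ => N v v + 1) := by
    ext u u'
    simp [lcomp, Matrix.single]
  rw [hA]
  -- multilinearity in the first row
  set B : Matrix Unit ↥T (ZMod 2) := Matrix.of fun _ j => N v j.1
  set C : Matrix ↥T Unit (ZMod 2) := Matrix.of fun i _ => N i.1 v
  set D := psub N T
  have h1 : (Matrix.fromBlocks (Matrix.of fun _ _ => N v v + 1) B C D)
      = Matrix.updateRow (Matrix.fromBlocks (Matrix.of fun _ _ => N v v) B C D) (Sum.inl ())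
        ((Matrix.fromBlocks (Matrix.of fun _ _ => N v v) B C D) (Sum.inl ())
          + (Pi.single (Sum.inl ()) (1 : ZMod 2) : Unit ⊕ ↥T → ZMod 2)) := by
    ext i j
    rcases i with ⟨⟩ | i
    · rw [Matrix.updateRow_self]
      rcases j with ⟨⟩ | j <;> simp [Matrix.fromBlocks, Pi.single_apply]
    · rw [Matrix.updateRow_ne (by simp)]
      rcases j with ⟨⟩ | j <;> rfl
  rw [h1, Matrix.det_updateRow_add]
  congr 1
  · congr 1
    exact Matrix.updateRow_eq_self _ _
  · have h2 : Matrix.updateRow (Matrix.fromBlocks (Matrix.of fun _ _ => N v v) B C D)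
        (Sum.inl ()) ((Pi.single (Sum.inl ()) (1 : ZMod 2) : Unit ⊕ ↥T → ZMod 2))
        = Matrix.fromBlocks 1 0 C D := by
      ext i j
      rcases i with ⟨⟩ | i
      · rw [Matrix.updateRow_self]
        rcases j with ⟨⟩ | j <;> simp [Matrix.fromBlocks, Pi.single_apply, Matrix.one_apply]
      · rw [Matrix.updateRow_ne (by simp)]
        rcases j with ⟨⟩ | j <;> rfl
    rw [h2, Matrix.det_fromBlocks_one₁₁]
    simp


variable {V : Type*} [DecidableEq V]

lemma move (N : Matrix V V (ZMod 2)) (v : V) (F : Finset V)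
    (h : (psub N F).det ≠ 0) :
    ∃ F', (psub (lcomp N v) F').det ≠ 0 ∧ (F' = F ∨ (v ∈ F ∧ F' = F.erase v)) := by
  by_cases hv : v ∈ F
  · by_cases h2 : (psub (lcomp N v) F).det = 0
    · refine ⟨F.erase v, ?_, Or.inr ⟨hv, rfl⟩⟩
      have hL := det_psub_lcomp_insert N v (F.erase v) (Finset.notMem_erase v F)
      rw [Finset.insert_erase hv] at hL
      rw [psub_lcomp_not_mem N v _ (Finset.notMem_erase v F)]
      intro h0
      rw [h0, add_zero] at hL
      exact h (hL ▸ h2)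
    · exact ⟨F, h2, Or.inl rfl⟩
  · exact ⟨F, by rwa [psub_lcomp_not_mem N v F hv], Or.inl rfl⟩

lemma card_erase_symmDiff (v : V) (F t : Finset V) (hv : v ∈ F) :
    (v ∈ t ∧ ((F.erase v) ∆ t).card = (F ∆ t).card + 1) ∨
    (v ∉ t ∧ ((F.erase v) ∆ t).card + 1 = (F ∆ t).card) := by
  by_cases h : v ∈ t
  · left
    refine ⟨h, ?_⟩
    have he : (F.erase v) ∆ t = insert v (F ∆ t) := by
      ext x
      by_cases hx : x = v
      · subst hx; simp [Finset.mem_symmDiff, h, hv]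
      · simp [Finset.mem_symmDiff, hx, Finset.mem_erase, Finset.mem_insert]
    rw [he, Finset.card_insert_of_notMem (by simp [Finset.mem_symmDiff, hv, h])]
  · right
    refine ⟨h, ?_⟩
    have he : (F.erase v) ∆ t = (F ∆ t).erase v := by
      ext x
      by_cases hx : x = v
      · subst hx; simp [Finset.mem_symmDiff, h, hv]
      · simp [Finset.mem_symmDiff, hx, Finset.mem_erase]
    have hmem : v ∈ F ∆ t := by simp [Finset.mem_symmDiff, hv, h]
    rw [he, Finset.card_erase_of_mem hmem]
    have : 0 < (F ∆ t).card := Finset.card_pos.mpr ⟨v, hmem⟩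
    omega

lemma move_card (N : Matrix V V (ZMod 2)) (v : V) (t F : Finset V)
    (h : (psub N F).det ≠ 0) :
    ∃ F', (psub (lcomp N v) F').det ≠ 0 ∧
      ((v ∈ t ∧ ((F' ∆ t).card = (F ∆ t).card ∨ (F' ∆ t).card = (F ∆ t).card + 1)) ∨
       (v ∉ t ∧ ((F' ∆ t).card = (F ∆ t).card ∨ (F' ∆ t).card + 1 = (F ∆ t).card))) := by
  obtain ⟨F', hd, hF'⟩ := move N v F h
  refine ⟨F', hd, ?_⟩
  by_cases hvt : v ∈ t
  · left
    refine ⟨hvt, ?_⟩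
    rcases hF' with rfl | ⟨hvF, rfl⟩
    · exact Or.inl rfl
    · rcases card_erase_symmDiff v F t hvF with ⟨_, hc⟩ | ⟨hn, _⟩
      · exact Or.inr hc
      · exact absurd hvt hn
  · right
    refine ⟨hvt, ?_⟩
    rcases hF' with rfl | ⟨hvF, rfl⟩
    · exact Or.inl rfl
    · rcases card_erase_symmDiff v F t hvF with ⟨hn, _⟩ | ⟨_, hc⟩
      · exact absurd hn hvt
      · exact Or.inr hc


abbrev W := {u : Fin 2 // u ≠ (1 : Fin 2)}

def w : W := ⟨0, by decide⟩

lemma eqw (a : W) : a = w := by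
  rcases a with ⟨a, ha⟩
  fin_cases a
  · rfl
  · exact absurd rfl ha

lemma finsetW (s : Finset W) : s = ∅ ∨ s = {w} := by
  rcases Finset.eq_empty_or_nonempty s with h | ⟨x, hx⟩
  · exact Or.inl h
  · right
    ext y
    simp only [Finset.mem_singleton]
    exact ⟨fun _ => eqw y, fun hy => hy ▸ (eqw x ▸ hx)⟩

lemma disjSum_symmDiff {α β : Type*} [DecidableEq α] [DecidableEq β]
    (s s' : Finset α) (t t' : Finset β) :
    (s.disjSum t) ∆ (s'.disjSum t') = (s ∆ s').disjSum (t ∆ t') := by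
  ext x
  rcases x with a | b <;>
    simp [Finset.mem_symmDiff, Finset.inl_mem_disjSum, Finset.inr_mem_disjSum]

variable {V2 : Type*} [Fintype V2] [DecidableEq V2] (M2 : Matrix V2 V2 (ZMod 2)) (v2 : V2)

/-- the join matrix in the theorem -/
def Mjoin : Matrix (W ⊕ V2) (W ⊕ V2) (ZMod 2) :=
  onePointJoin !![1, 1; 1, M2 v2 v2] (1 : Fin 2) M2 v2

def eInr (t : Finset V2) : ↥t ≃ ↥((∅ : Finset W).disjSum t) where
  toFun x := ⟨Sum.inr x.1, Finset.inr_mem_disjSum.mpr x.2⟩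
  invFun y := match y with
    | ⟨Sum.inl a, h⟩ => absurd (Finset.inl_mem_disjSum.mp h) (Finset.notMem_empty a)
    | ⟨Sum.inr b, h⟩ => ⟨b, Finset.inr_mem_disjSum.mp h⟩
  left_inv := by rintro ⟨x, hx⟩; rfl
  right_inv := by
    rintro ⟨a | b, h⟩
    · exact absurd (Finset.inl_mem_disjSum.mp h) (Finset.notMem_empty a)
    · rfl

lemma detDJ0 (t : Finset V2) :
    (psub (Mjoin M2 v2) ((∅ : Finset W).disjSum t)).det = (psub M2 t).det := by
  rw [← Matrix.det_submatrix_equiv_self (eInr t) (psub (Mjoin M2 v2) ((∅ : Finset W).disjSum t))]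
  congr 1

def eW (t : Finset V2) : Unit ⊕ ↥t ≃ ↥(({w} : Finset W).disjSum t) where
  toFun := Sum.elim (fun _ => ⟨Sum.inl w, Finset.inl_mem_disjSum.mpr (Finset.mem_singleton_self w)⟩)
    (fun x => ⟨Sum.inr x.1, Finset.inr_mem_disjSum.mpr x.2⟩)
  invFun y := match y with
    | ⟨Sum.inl _, _⟩ => Sum.inl ()
    | ⟨Sum.inr b, h⟩ => Sum.inr ⟨b, Finset.inr_mem_disjSum.mp h⟩
  left_inv := by rintro (⟨⟩ | ⟨x, hx⟩) <;> rfl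
  right_inv := by
    rintro ⟨a | b, h⟩
    · simp only [Sum.elim_inl]
      congr 1
      exact congrArg Sum.inl (eqw a).symm
    · rfl

lemma detDJ1 (t : Finset V2) :
    (psub (Mjoin M2 v2) (({w} : Finset W).disjSum t)).det = (psub (lcomp M2 v2) t).det := by
  rw [← Matrix.det_submatrix_equiv_self (eW t) (psub (Mjoin M2 v2) (({w} : Finset W).disjSum t))]
  have hblock : (psub (Mjoin M2 v2) (({w} : Finset W).disjSum t)).submatrix (eW t) (eW t)
      = Matrix.fromBlocks 1 (Matrix.of fun _ j => if j.1 = v2 then 1 else 0)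
          (Matrix.of fun i _ => if i.1 = v2 then 1 else 0) (psub M2 t) := by
    ext i j
    rcases i with ⟨⟩ | i <;> rcases j with ⟨⟩ | j
    · simp [psub, eW, Mjoin, onePointJoin, Matrix.one_apply, w]
      rfl
    · simp [psub, eW, Mjoin, onePointJoin, show ((w : W) : Fin 2) = 0 from rfl]
    · simp [psub, eW, Mjoin, onePointJoin, show ((w : W) : Fin 2) = 0 from rfl]
    · rfl
  rw [hblock, Matrix.det_fromBlocks_one₁₁]
  congr 1
  ext i j
  by_cases hij : i.1 = v2 ∧ j.1 = v2
  · obtain ⟨h1, h2⟩ := hij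
    simp [psub, lcomp, Matrix.mul_apply, Matrix.sub_apply, h1, h2, Matrix.single,
      CharTwo.sub_eq_add]
  · rw [not_and_or] at hij
    rcases hij with h1 | h1 <;>
      simp [psub, lcomp, Matrix.mul_apply, Matrix.sub_apply, h1, Matrix.single,
        CharTwo.sub_eq_add, Ne.symm]

section
variable {V : Type*} [DecidableEq V]

def Kf (N : Matrix V V (ZMod 2)) (A : Finset V) : Set ℕ :=
  {k | ∃ F, (psub N F).det ≠ 0 ∧ (F ∆ A).card = k}

lemma twistWidth_eq (N : Matrix V V (ZMod 2)) (A : Finset V) :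
    twistWidth N A = sSup (Kf N A) - sInf (Kf N A) := by
  have h : {k | ∃ S, (psub N (S ∆ A)).det ≠ 0 ∧ S.card = k} = Kf N A := by
    ext k
    constructor
    · rintro ⟨S, h1, rfl⟩
      exact ⟨S ∆ A, h1, by rw [symmDiff_symmDiff_cancel_right]⟩
    · rintro ⟨F, h1, rfl⟩
      exact ⟨F ∆ A, by rwa [symmDiff_symmDiff_cancel_right], rfl⟩
  unfold twistWidth sysWidth
  rw [h]

lemma empty_symmDiff' (A : Finset V) : (∅ : Finset V) ∆ A = A := by
  ext x; simp [Finset.mem_symmDiff]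

lemma symmDiff_empty' (A : Finset V) : A ∆ (∅ : Finset V) = A := by
  ext x; simp [Finset.mem_symmDiff]

lemma symmDiff_self' (A : Finset V) : A ∆ A = ∅ := by
  ext x; simp [Finset.mem_symmDiff]

lemma Kf_nonempty (N : Matrix V V (ZMod 2)) (A : Finset V) : (Kf N A).Nonempty :=
  ⟨A.card, ∅, by rw [det_psub_empty]; exact one_ne_zero, by rw [empty_symmDiff']⟩

lemma Kf_bdd [Fintype V] (N : Matrix V V (ZMod 2)) (A : Finset V) : BddAbove (Kf N A) := by
  refine ⟨Fintype.card V, ?_⟩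
  rintro k ⟨F, -, rfl⟩
  exact (Finset.card_le_univ _).trans_eq Finset.card_univ

lemma sSup_image_succ {K : Set ℕ} (hne : K.Nonempty) (hbdd : BddAbove K) :
    sSup ((fun k => k + 1) '' K) = sSup K + 1 := by
  obtain ⟨bb, hbb⟩ := hbdd
  apply le_antisymm
  · apply csSup_le (hne.image _)
    rintro x ⟨m, hm, rfl⟩
    exact Nat.succ_le_succ (le_csSup ⟨bb, hbb⟩ hm)
  · refine le_csSup ⟨bb + 1, ?_⟩ ⟨sSup K, Nat.sSup_mem hne ⟨bb, hbb⟩, rfl⟩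
    rintro x ⟨m, hm, rfl⟩
    exact Nat.succ_le_succ (hbb hm)

lemma sInf_image_succ {K : Set ℕ} (hne : K.Nonempty) :
    sInf ((fun k => k + 1) '' K) = sInf K + 1 := by
  apply le_antisymm
  · exact Nat.sInf_le ⟨sInf K, Nat.sInf_mem hne, rfl⟩
  · apply le_csInf (hne.image _)
    rintro x ⟨m, hm, rfl⟩
    exact Nat.succ_le_succ (Nat.sInf_le hm)

end

section
variable {V2 : Type*} [Fintype V2] [DecidableEq V2] (M2 : Matrix V2 V2 (ZMod 2)) (v2 : V2)

lemma KJ0 (t : Finset V2) :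
    Kf (Mjoin M2 v2) ((∅ : Finset W).disjSum t)
      = Kf M2 t ∪ (fun k => k + 1) '' Kf (lcomp M2 v2) t := by
  have h00 : ((∅ : Finset W) ∆ ∅) = ∅ := empty_symmDiff' ∅
  have h0w : ((∅ : Finset W) ∆ {w}) = {w} := empty_symmDiff' {w}
  have hw0 : (({w} : Finset W) ∆ ∅) = {w} := symmDiff_empty' {w}
  ext k
  constructor
  · rintro ⟨F, hF, rfl⟩
    obtain ⟨s', t', rfl⟩ : ∃ s' t', F = s'.disjSum t' :=
      ⟨F.toLeft, F.toRight, Finset.toLeft_disjSum_toRight.symm⟩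
    rcases finsetW s' with rfl | rfl
    · left
      rw [detDJ0] at hF
      refine ⟨t', hF, ?_⟩
      rw [disjSum_symmDiff, Finset.card_disjSum, h00, Finset.card_empty, zero_add]
    · right
      rw [detDJ1] at hF
      refine ⟨(t' ∆ t).card, ⟨t', hF, rfl⟩, ?_⟩
      rw [disjSum_symmDiff, Finset.card_disjSum, hw0, Finset.card_singleton]
      simp [Nat.add_comm]
  · rintro (⟨F2, h1, rfl⟩ | ⟨m, ⟨F2, h1, rfl⟩, rfl⟩)
    · refine ⟨(∅ : Finset W).disjSum F2, by rw [detDJ0]; exact h1, ?_⟩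
      rw [disjSum_symmDiff, Finset.card_disjSum, h00, Finset.card_empty, zero_add]
    · refine ⟨({w} : Finset W).disjSum F2, by rw [detDJ1]; exact h1, ?_⟩
      rw [disjSum_symmDiff, Finset.card_disjSum, hw0, Finset.card_singleton]
      simp [Nat.add_comm]

lemma KJ1 (t : Finset V2) :
    Kf (Mjoin M2 v2) (({w} : Finset W).disjSum t)
      = (fun k => k + 1) '' Kf M2 t ∪ Kf (lcomp M2 v2) t := by
  have h0w : ((∅ : Finset W) ∆ {w}) = {w} := empty_symmDiff' {w}
  have hww : (({w} : Finset W) ∆ {w}) = ∅ := symmDiff_self' {w}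
  ext k
  constructor
  · rintro ⟨F, hF, rfl⟩
    obtain ⟨s', t', rfl⟩ : ∃ s' t', F = s'.disjSum t' :=
      ⟨F.toLeft, F.toRight, Finset.toLeft_disjSum_toRight.symm⟩
    rcases finsetW s' with rfl | rfl
    · left
      rw [detDJ0] at hF
      refine ⟨(t' ∆ t).card, ⟨t', hF, rfl⟩, ?_⟩
      rw [disjSum_symmDiff, Finset.card_disjSum, h0w, Finset.card_singleton]
      simp [Nat.add_comm]
    · right
      rw [detDJ1] at hF
      refine ⟨t', hF, ?_⟩
      rw [disjSum_symmDiff, Finset.card_disjSum, hww, Finset.card_empty, zero_add]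
  · rintro (⟨m, ⟨F2, h1, rfl⟩, rfl⟩ | ⟨F2, h1, rfl⟩)
    · refine ⟨(∅ : Finset W).disjSum F2, by rw [detDJ0]; exact h1, ?_⟩
      rw [disjSum_symmDiff, Finset.card_disjSum, h0w, Finset.card_singleton]
      simp [Nat.add_comm]
    · refine ⟨({w} : Finset W).disjSum F2, by rw [detDJ1]; exact h1, ?_⟩
      rw [disjSum_symmDiff, Finset.card_disjSum, hww, Finset.card_empty, zero_add]

lemma keylemT (a b c d p q r s : ℕ)
    (hab : a ≤ b) (hcd : c ≤ d)
    (hp1 : c ≤ p) (hp2 : p ≤ d) (hq2 : q ≤ d)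
    (hr1 : a ≤ r) (hs2 : s ≤ b)
    (h1 : p = a ∨ p = a + 1) (h2 : q = b ∨ q = b + 1)
    (h3 : r = c ∨ r = c + 1) (h4 : s = d ∨ s = d + 1) :
    (max b (d + 1) - min a (c + 1) = (b - a) + 1 ∧ max (b + 1) d - min (a + 1) c = (d - c) + 1)
      ∨ (max b (d + 1) - min a (c + 1) = (d - c) + 1 ∧ max (b + 1) d - min (a + 1) c = (b - a) + 1) := by
  omega

lemma keylemF (a b c d p q r s : ℕ)
    (hab : a ≤ b) (hcd : c ≤ d)
    (hp1 : c ≤ p) (hp2 : p ≤ d) (hq2 : q ≤ d)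
    (hr1 : a ≤ r) (hs2 : s ≤ b)
    (h1 : p = a ∨ p + 1 = a) (h2 : q = b ∨ q + 1 = b)
    (h3 : r = c ∨ r + 1 = c) (h4 : s = d ∨ s + 1 = d) :
    (max b (d + 1) - min a (c + 1) = (b - a) + 1 ∧ max (b + 1) d - min (a + 1) c = (d - c) + 1)
      ∨ (max b (d + 1) - min a (c + 1) = (d - c) + 1 ∧ max (b + 1) d - min (a + 1) c = (b - a) + 1) := by
  omega

lemma pair_eq (t : Finset V2) :
    (X : Polynomial ℤ) ^ twistWidth (Mjoin M2 v2) ((∅ : Finset W).disjSum t)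
      + X ^ twistWidth (Mjoin M2 v2) (({w} : Finset W).disjSum t)
    = X ^ (twistWidth M2 t + 1) + X ^ (twistWidth (lcomp M2 v2) t + 1) := by
  classical
  have ne1 : (Kf M2 t).Nonempty := Kf_nonempty _ _
  have ne2 : (Kf (lcomp M2 v2) t).Nonempty := Kf_nonempty _ _
  have bdd1 : BddAbove (Kf M2 t) := Kf_bdd _ _
  have bdd2 : BddAbove (Kf (lcomp M2 v2) t) := Kf_bdd _ _
  have bddim2 : BddAbove ((fun k => k + 1) '' Kf (lcomp M2 v2) t) := by
    obtain ⟨bb, hbb⟩ := bdd2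
    refine ⟨bb + 1, ?_⟩
    rintro x ⟨m, hm, rfl⟩
    exact Nat.succ_le_succ (hbb hm)
  have bddim1 : BddAbove ((fun k => k + 1) '' Kf M2 t) := by
    obtain ⟨bb, hbb⟩ := bdd1
    refine ⟨bb + 1, ?_⟩
    rintro x ⟨m, hm, rfl⟩
    exact Nat.succ_le_succ (hbb hm)
  have hW0 : twistWidth (Mjoin M2 v2) ((∅ : Finset W).disjSum t)
      = max (sSup (Kf M2 t)) (sSup (Kf (lcomp M2 v2) t) + 1)
        - min (sInf (Kf M2 t)) (sInf (Kf (lcomp M2 v2) t) + 1) := by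
    rw [twistWidth_eq, KJ0, csSup_union bdd1 ne1 bddim2 (ne2.image _),
      csInf_union (OrderBot.bddBelow _) ne1 (OrderBot.bddBelow _) (ne2.image _),
      sSup_image_succ ne2 bdd2, sInf_image_succ ne2]
  have hW1 : twistWidth (Mjoin M2 v2) (({w} : Finset W).disjSum t)
      = max (sSup (Kf M2 t) + 1) (sSup (Kf (lcomp M2 v2) t))
        - min (sInf (Kf M2 t) + 1) (sInf (Kf (lcomp M2 v2) t)) := by
    rw [twistWidth_eq, KJ1, csSup_union bddim1 (ne1.image _) bdd2 ne2,
      csInf_union (OrderBot.bddBelow _) (ne1.image _) (OrderBot.bddBelow _) ne2,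
      sSup_image_succ ne1 bdd1, sInf_image_succ ne1]
  have htw1 : twistWidth M2 t = sSup (Kf M2 t) - sInf (Kf M2 t) := twistWidth_eq _ _
  have htw2 : twistWidth (lcomp M2 v2) t
      = sSup (Kf (lcomp M2 v2) t) - sInf (Kf (lcomp M2 v2) t) := twistWidth_eq _ _
  have hab : sInf (Kf M2 t) ≤ sSup (Kf M2 t) := Nat.sInf_le (Nat.sSup_mem ne1 bdd1)
  have hcd : sInf (Kf (lcomp M2 v2) t) ≤ sSup (Kf (lcomp M2 v2) t) :=
    Nat.sInf_le (Nat.sSup_mem ne2 bdd2)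
  have hmv12 : ∀ k ∈ Kf M2 t, ∃ k' ∈ Kf (lcomp M2 v2) t,
      ((v2 ∈ t ∧ (k' = k ∨ k' = k + 1)) ∨ (v2 ∉ t ∧ (k' = k ∨ k' + 1 = k))) := by
    rintro k ⟨F, hF, rfl⟩
    obtain ⟨F', hdet, hcard⟩ := move_card M2 v2 t F hF
    exact ⟨(F' ∆ t).card, ⟨F', hdet, rfl⟩, by tauto⟩
  have hmv21 : ∀ k ∈ Kf (lcomp M2 v2) t, ∃ k' ∈ Kf M2 t,
      ((v2 ∈ t ∧ (k' = k ∨ k' = k + 1)) ∨ (v2 ∉ t ∧ (k' = k ∨ k' + 1 = k))) := by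
    rintro k ⟨F, hF, rfl⟩
    obtain ⟨F', hdet, hcard⟩ := move_card (lcomp M2 v2) v2 t F hF
    rw [lcomp_lcomp] at hdet
    exact ⟨(F' ∆ t).card, ⟨F', hdet, rfl⟩, by tauto⟩
  obtain ⟨p, hpK, hp⟩ := hmv12 _ (Nat.sInf_mem ne1)
  obtain ⟨q, hqK, hq⟩ := hmv12 _ (Nat.sSup_mem ne1 bdd1)
  obtain ⟨r, hrK, hr⟩ := hmv21 _ (Nat.sInf_mem ne2)
  obtain ⟨s, hsK, hs⟩ := hmv21 _ (Nat.sSup_mem ne2 bdd2)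
  have hp1 : sInf (Kf (lcomp M2 v2) t) ≤ p := Nat.sInf_le hpK
  have hp2 : p ≤ sSup (Kf (lcomp M2 v2) t) := le_csSup bdd2 hpK
  have hq1 : sInf (Kf (lcomp M2 v2) t) ≤ q := Nat.sInf_le hqK
  have hq2 : q ≤ sSup (Kf (lcomp M2 v2) t) := le_csSup bdd2 hqK
  have hr1 : sInf (Kf M2 t) ≤ r := Nat.sInf_le hrK
  have hr2 : r ≤ sSup (Kf M2 t) := le_csSup bdd1 hrK
  have hs1 : sInf (Kf M2 t) ≤ s := Nat.sInf_le hsK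
  have hs2 : s ≤ sSup (Kf M2 t) := le_csSup bdd1 hsK
  by_cases hv : v2 ∈ t
  · have e1 : p = sInf (Kf M2 t) ∨ p = sInf (Kf M2 t) + 1 := by
      rcases hp with ⟨-, h⟩ | ⟨hn, -⟩
      · exact h
      · exact absurd hv hn
    have e2 : q = sSup (Kf M2 t) ∨ q = sSup (Kf M2 t) + 1 := by
      rcases hq with ⟨-, h⟩ | ⟨hn, -⟩
      · exact h
      · exact absurd hv hn
    have e3 : r = sInf (Kf (lcomp M2 v2) t) ∨ r = sInf (Kf (lcomp M2 v2) t) + 1 := by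
      rcases hr with ⟨-, h⟩ | ⟨hn, -⟩
      · exact h
      · exact absurd hv hn
    have e4 : s = sSup (Kf (lcomp M2 v2) t) ∨ s = sSup (Kf (lcomp M2 v2) t) + 1 := by
      rcases hs with ⟨-, h⟩ | ⟨hn, -⟩
      · exact h
      · exact absurd hv hn
    have key := keylemT _ _ _ _ p q r s hab hcd hp1 hp2 hq2 hr1 hs2 e1 e2 e3 e4
    rw [hW0, hW1, htw1, htw2]
    rcases key with ⟨h1, h2⟩ | ⟨h1, h2⟩
    · rw [h1, h2]
    · rw [h1, h2]
      exact add_comm _ _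
  · have e1 : p = sInf (Kf M2 t) ∨ p + 1 = sInf (Kf M2 t) := by
      rcases hp with ⟨hn, -⟩ | ⟨-, h⟩
      · exact absurd hn hv
      · exact h
    have e2 : q = sSup (Kf M2 t) ∨ q + 1 = sSup (Kf M2 t) := by
      rcases hq with ⟨hn, -⟩ | ⟨-, h⟩
      · exact absurd hn hv
      · exact h
    have e3 : r = sInf (Kf (lcomp M2 v2) t) ∨ r + 1 = sInf (Kf (lcomp M2 v2) t) := by
      rcases hr with ⟨hn, -⟩ | ⟨-, h⟩
      · exact absurd hn hv
      · exact h
    have e4 : s = sSup (Kf (lcomp M2 v2) t) ∨ s + 1 = sSup (Kf (lcomp M2 v2) t) := by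
      rcases hs with ⟨hn, -⟩ | ⟨-, h⟩
      · exact absurd hn hv
      · exact h
    have key := keylemF _ _ _ _ p q r s hab hcd hp1 hp2 hq2 hr1 hs2 e1 e2 e3 e4
    rw [hW0, hW1, htw1, htw2]
    rcases key with ⟨h1, h2⟩ | ⟨h1, h2⟩
    · rw [h1, h2]
    · rw [h1, h2]
      exact add_comm _ _

def eFS (V2' : Type*) [DecidableEq V2'] : Finset W × Finset V2' ≃ Finset (W ⊕ V2') where
  toFun p := p.1.disjSum p.2
  invFun A := (A.toLeft, A.toRight)
  left_inv p := by simp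
  right_inv A := Finset.toLeft_disjSum_toRight

end

end TP

/-- Proposition 4.2(b): if `G1` consists of two vertices `w` (looped) and `v1` joined by
an edge (`v1` having the same loop status as `v2`), then
`T_{(G1,v1)∨(G2,v2)} = z·T_{G2} + z·T_{G2+v2}`.  Here `G1` has adjacency matrix
`!![1, 1; 1, M2 v2 v2]` with `w` the vertex `0` and `v1` the vertex `1`. -/
theorem twistPoly_join_looped_leaf
    {V2 : Type*} [Fintype V2] [DecidableEq V2]
    (M2 : Matrix V2 V2 (ZMod 2)) (hM2 : M2.IsSymm) (v2 : V2) :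
    twistPoly (onePointJoin !![1, 1; 1, M2 v2 v2] (1 : Fin 2) M2 v2)
      = X * twistPoly M2 + X * twistPoly (lcomp M2 v2) := by
  classical
  have hre : twistPoly (onePointJoin !![1, 1; 1, M2 v2 v2] (1 : Fin 2) M2 v2)
      = ∑ p : Finset TP.W × Finset V2,
          (X : Polynomial ℤ) ^ twistWidth (TP.Mjoin M2 v2) (p.1.disjSum p.2) := by
    rw [twistPoly]
    exact (Fintype.sum_equiv (TP.eFS V2) _ _ (fun p => rfl)).symm
  rw [hre, Fintype.sum_prod_type]
  have huniv : (Finset.univ : Finset (Finset TP.W)) = {∅, {TP.w}} := by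
    ext s
    simp only [Finset.mem_univ, true_iff, Finset.mem_insert, Finset.mem_singleton]
    exact TP.finsetW s
  rw [huniv, Finset.sum_insert
    (Finset.notMem_singleton.mpr (Ne.symm (Finset.singleton_ne_empty TP.w))),
    Finset.sum_singleton]
  rw [twistPoly, twistPoly, Finset.mul_sum, Finset.mul_sum, ← Finset.sum_add_distrib,
    ← Finset.sum_add_distrib]
  apply Finset.sum_congr rfl
  intro t _
  have hx : ∀ n : ℕ, (X : Polynomial ℤ) * X ^ n = X ^ (n + 1) := fun n => by ring
  rw [hx, hx]
  exact TP.pair_eq M2 v2 t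
end

section
/- For every looped simple graph G and every vertex v ∈ V(G), T_G(−1/2) + T_{G+v}(−1/2) − T_{G−v}(−1/2) = 0, where the polynomials T_G, T_{G+v}, T_{G−v} ∈ ℤ[z] are evaluated at the rational number −1/2. -/
open Matrix Polynomial

set_option linter.unusedSectionVars false
set_option maxHeartbeats 1600000

section RankTools

variable {K : Type*} [Field K]
variable {ι : Type*} [Fintype ι] [DecidableEq ι]

lemma rank_submatrix_le'' {l m n o : Type*} [Fintype l] [Fintype m] [Fintype n] [Fintype o]
    [DecidableEq m] [DecidableEq n]
    (A : Matrix m n K) (f : l → m) (g : o → n) :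
    (A.submatrix f g).rank ≤ A.rank := by
  have h : A.submatrix f g =
      (Matrix.of fun i k => if k = f i then (1:K) else 0) * A *
        (Matrix.of fun k j => if k = g j then (1:K) else 0) := by
    ext i j
    simp [Matrix.mul_apply, Finset.sum_ite_eq', ite_and, Finset.sum_ite_eq]
  calc ((A.submatrix f g)).rank = _ := by rw [h]
    _ ≤ (((Matrix.of fun i k => if k = f i then (1:K) else 0) : Matrix l m K) * A).rank :=
        Matrix.rank_mul_le_left _ _
    _ ≤ A.rank := Matrix.rank_mul_le_right _ _

lemma finrank_span_insert_of_not_mem {W : Type*} [AddCommGroup W] [Module K W]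
    [FiniteDimensional K W] {s : Set W} {x : W} (h : x ∉ Submodule.span K s) :
    Module.finrank K (Submodule.span K (insert x s)) =
      Module.finrank K (Submodule.span K s) + 1 := by
  have hx0 : x ≠ 0 := fun hx => h (hx ▸ Submodule.zero_mem _)
  have hinf : Submodule.span K {x} ⊓ Submodule.span K s = ⊥ := by
    rw [eq_bot_iff]
    rintro y ⟨hy1, hy2⟩
    rcases Submodule.mem_span_singleton.mp hy1 with ⟨c, rfl⟩
    rcases eq_or_ne c 0 with rfl | hc
    · simp
    · exact absurd (by simpa using (Submodule.smul_mem_iff _ hc).mp hy2) h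
  have := Submodule.finrank_sup_add_finrank_inf_eq (Submodule.span K {x}) (Submodule.span K s)
  rw [Submodule.span_insert]
  rw [hinf] at this
  simp only [finrank_bot, add_zero, finrank_span_singleton hx0] at this
  omega


def rdel (N : Matrix ι ι K) (v : ι) : Matrix {u : ι // u ≠ v} ι K :=
  N.submatrix Subtype.val id

lemma range_rows_eq (N : Matrix ι ι K) (v : ι) :
    Set.range N = insert (N v) (Set.range fun u : {u : ι // u ≠ v} => N u.1) := by
  ext y
  constructor
  · rintro ⟨i, rfl⟩
    rcases eq_or_ne i v with rfl | hi
    · exact Set.mem_insert _ _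
    · exact Set.mem_insert_of_mem _ ⟨⟨i, hi⟩, rfl⟩
  · rintro (rfl | ⟨u, rfl⟩)
    · exact ⟨v, rfl⟩
    · exact ⟨u.1, rfl⟩

lemma rank_rdel_eq_finrank (N : Matrix ι ι K) (v : ι) :
    (rdel N v).rank =
      Module.finrank K (Submodule.span K (Set.range fun u : {u : ι // u ≠ v} => N u.1)) := by
  rw [Matrix.rank_eq_finrank_span_row]
  rfl

lemma rank_eq_rank_deleteRow_of_mem (N : Matrix ι ι K) (v : ι)
    (h : (N v) ∈ Submodule.span K (Set.range fun u : {u : ι // u ≠ v} => N u.1)) :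
    N.rank = (rdel N v).rank := by
  rw [Matrix.rank_eq_finrank_span_row, Matrix.row.eq_1, rank_rdel_eq_finrank, range_rows_eq N v,
    Submodule.span_insert_eq_span h]

lemma rank_eq_rank_deleteRow_of_not_mem (N : Matrix ι ι K) (v : ι)
    (h : (N v) ∉ Submodule.span K (Set.range fun u : {u : ι // u ≠ v} => N u.1)) :
    N.rank = (rdel N v).rank + 1 := by
  rw [Matrix.rank_eq_finrank_span_row, Matrix.row.eq_1, rank_rdel_eq_finrank, range_rows_eq N v,
    finrank_span_insert_of_not_mem h]
lemma range_cols_eq (N : Matrix ι ι K) (v : ι) :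
    Set.range (rdel N v)ᵀ =
      insert (fun u : {u : ι // u ≠ v} => N u.1 v) (Set.range (vdel N v)ᵀ) := by
  ext y
  constructor
  · rintro ⟨j, rfl⟩
    rcases eq_or_ne j v with rfl | hj
    · exact Set.mem_insert _ _
    · exact Set.mem_insert_of_mem _ ⟨⟨j, hj⟩, rfl⟩
  · rintro (rfl | ⟨u, rfl⟩)
    · exact ⟨v, rfl⟩
    · exact ⟨u.1, rfl⟩

lemma rank_deleteRow_eq_principal_of_mem (N : Matrix ι ι K) (v : ι)
    (h : (fun u : {u : ι // u ≠ v} => N u.1 v) ∈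
        Submodule.span K (Set.range (vdel N v)ᵀ)) :
    (rdel N v).rank = (vdel N v).rank := by
  rw [Matrix.rank_eq_finrank_span_cols, Matrix.rank_eq_finrank_span_cols, Matrix.col.eq_1,
    Matrix.col.eq_1, range_cols_eq N v,
    Submodule.span_insert_eq_span h]

lemma rank_deleteRow_eq_principal_of_not_mem (N : Matrix ι ι K) (v : ι)
    (h : (fun u : {u : ι // u ≠ v} => N u.1 v) ∉
        Submodule.span K (Set.range (vdel N v)ᵀ)) :
    (rdel N v).rank = (vdel N v).rank + 1 := by
  rw [Matrix.rank_eq_finrank_span_cols, Matrix.rank_eq_finrank_span_cols, Matrix.col.eq_1,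
    Matrix.col.eq_1, range_cols_eq N v,
    finrank_span_insert_of_not_mem h]


lemma rdel_add_std (N : Matrix ι ι K) (v : ι) :
    rdel (N + Matrix.single v v 1) v = rdel N v := by
  ext u j
  simp only [rdel, Matrix.submatrix_apply, Matrix.add_apply, id_eq]
  rw [Matrix.single_apply_of_ne _ _ _ _ _ (fun h => u.2 h.1.symm), add_zero]

lemma vdel_add_std (N : Matrix ι ι K) (v : ι) :
    vdel (N + Matrix.single v v 1) v = vdel N v := by
  ext u j
  simp only [vdel, Matrix.submatrix_apply, Matrix.add_apply]
  rw [Matrix.single_apply_of_ne _ _ _ _ _ (fun h => u.2 h.1.symm), add_zero]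

lemma rank_border_trichotomy (N : Matrix ι ι (ZMod 2)) (hN : N.IsSymm) (v : ι) :
    (N.rank = (vdel N v).rank ∧
      (N + Matrix.single v v 1).rank = (vdel N v).rank + 1) ∨
    (N.rank = (vdel N v).rank + 1 ∧
      (N + Matrix.single v v 1).rank = (vdel N v).rank) ∨
    (N.rank = (vdel N v).rank + 2 ∧
      (N + Matrix.single v v 1).rank = (vdel N v).rank + 2) := by
  have hsym : ∀ i j, N i j = N j i := fun i j => hN.apply j i
  set N' := N + Matrix.single v v 1 with hN'def
  have hrowN' : ∀ u : {u : ι // u ≠ v}, N' u.1 = N u.1 := by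
    intro u; funext j
    simp only [hN'def, Matrix.add_apply]
    rw [Matrix.single_apply_of_ne _ _ _ _ _ (fun h => u.2 h.1.symm), add_zero]
  have hN'vj : ∀ j, j ≠ v → N' v j = N v j := by
    intro j hj
    simp only [hN'def, Matrix.add_apply]
    rw [Matrix.single_apply_of_ne _ _ _ _ _ (fun h => hj h.2.symm), add_zero]
  have hN'vv : N' v v = N v v + 1 := by
    simp [hN'def]
  have hrangeN' : (Set.range fun u : {u : ι // u ≠ v} => N' u.1)
      = (Set.range fun u : {u : ι // u ≠ v} => N u.1) :=
    congrArg Set.range (funext hrowN')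
  by_cases hz : (fun u : {u : ι // u ≠ v} => N u.1 v) ∈
      Submodule.span (ZMod 2) (Set.range (vdel N v)ᵀ)
  · obtain ⟨w, hw⟩ := (Submodule.mem_span_range_iff_exists_fun _).mp hz
    have hwc : ∀ u : {u : ι // u ≠ v},
        ∑ j : {u : ι // u ≠ v}, w j * N u.1 j.1 = N u.1 v := by
      intro u
      have := congrFun hw u
      simpa [Finset.sum_apply, vdel, Matrix.transpose_apply, mul_comm] using this
    have hrk : (rdel N v).rank = (vdel N v).rank :=
      rank_deleteRow_eq_principal_of_mem N v hz
    have hrk' : (rdel N' v).rank = (vdel N v).rank := by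
      rw [hN'def, rdel_add_std]; exact hrk
    have key : ∀ c : {u : ι // u ≠ v} → ZMod 2,
        (∀ j : {u : ι // u ≠ v}, (∑ u, c u * N u.1 j.1) = N v j.1) →
        (∑ u, c u * N u.1 v) = ∑ j, w j * N j.1 v := by
      intro c hc
      calc (∑ u, c u * N u.1 v)
          = ∑ u, c u * (∑ j, w j * N u.1 j.1) := by
            refine Finset.sum_congr rfl fun u _ => ?_; rw [hwc u]
        _ = ∑ u, ∑ j, c u * (w j * N u.1 j.1) := by
            exact Finset.sum_congr rfl fun u _ => Finset.mul_sum _ _ _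
        _ = ∑ j, ∑ u, c u * (w j * N u.1 j.1) := Finset.sum_comm
        _ = ∑ j, w j * (∑ u, c u * N u.1 j.1) := by
            refine Finset.sum_congr rfl fun j _ => ?_
            rw [Finset.mul_sum]
            exact Finset.sum_congr rfl fun u _ => by ring
        _ = ∑ j, w j * N v j.1 := by
            refine Finset.sum_congr rfl fun j _ => by rw [hc j]
        _ = ∑ j, w j * N j.1 v := by
            refine Finset.sum_congr rfl fun j _ => by rw [hsym v j.1]
    by_cases hα : N v v = ∑ j, w j * N j.1 v
    · left
      constructor
      · have hmem : N v ∈ Submodule.span (ZMod 2)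
            (Set.range fun u : {u : ι // u ≠ v} => N u.1) := by
          rw [Submodule.mem_span_range_iff_exists_fun]
          refine ⟨w, funext fun j => ?_⟩
          rw [Finset.sum_apply]
          simp only [Pi.smul_apply, smul_eq_mul]
          rcases eq_or_ne j v with rfl | hj
          · exact hα.symm
          · calc (∑ u, w u * N u.1 j) = ∑ u, w u * N j u.1 := by
                  refine Finset.sum_congr rfl fun u _ => by rw [hsym u.1 j]
              _ = N j v := hwc ⟨j, hj⟩
              _ = N v j := hsym j v
        rw [rank_eq_rank_deleteRow_of_mem N v hmem, hrk]
      · have hnmem : N' v ∉ Submodule.span (ZMod 2)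
            (Set.range fun u : {u : ι // u ≠ v} => N' u.1) := by
          rw [hrangeN', Submodule.mem_span_range_iff_exists_fun]
          rintro ⟨c, hc⟩
          have hc1 : ∀ j : {u : ι // u ≠ v}, (∑ u, c u * N u.1 j.1) = N v j.1 := by
            intro j
            have := congrFun hc j.1
            rw [Finset.sum_apply] at this
            simp only [Pi.smul_apply, smul_eq_mul] at this
            rw [this, hN'vj j.1 j.2]
          have h1 := key c hc1
          have h2 := congrFun hc v
          rw [Finset.sum_apply] at h2
          simp only [Pi.smul_apply, smul_eq_mul] at h2
          rw [h1, hN'vv, ← hα] at h2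
          exact (by decide : ∀ x : ZMod 2, x = x + 1 → False) _ h2
        rw [rank_eq_rank_deleteRow_of_not_mem N' v hnmem, hrk']
    · right; left
      constructor
      · have hnmem : N v ∉ Submodule.span (ZMod 2)
            (Set.range fun u : {u : ι // u ≠ v} => N u.1) := by
          rw [Submodule.mem_span_range_iff_exists_fun]
          rintro ⟨c, hc⟩
          have hc1 : ∀ j : {u : ι // u ≠ v}, (∑ u, c u * N u.1 j.1) = N v j.1 := by
            intro j
            have := congrFun hc j.1
            rw [Finset.sum_apply] at this
            simp only [Pi.smul_apply, smul_eq_mul] at this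
            rw [this]
          have h1 := key c hc1
          have h2 := congrFun hc v
          rw [Finset.sum_apply] at h2
          simp only [Pi.smul_apply, smul_eq_mul] at h2
          rw [h1] at h2
          exact hα h2.symm
        rw [rank_eq_rank_deleteRow_of_not_mem N v hnmem, hrk]
      · have hmem : N' v ∈ Submodule.span (ZMod 2)
            (Set.range fun u : {u : ι // u ≠ v} => N' u.1) := by
          rw [hrangeN', Submodule.mem_span_range_iff_exists_fun]
          refine ⟨w, funext fun j => ?_⟩
          rw [Finset.sum_apply]
          simp only [Pi.smul_apply, smul_eq_mul]
          rcases eq_or_ne j v with rfl | hj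
          · rw [hN'vv]
            exact (by decide : ∀ x y : ZMod 2, ¬(x = y) → y = x + 1) _ _ hα
          · rw [hN'vj j hj]
            calc (∑ u, w u * N u.1 j) = ∑ u, w u * N j u.1 := by
                  refine Finset.sum_congr rfl fun u _ => by rw [hsym u.1 j]
              _ = N j v := hwc ⟨j, hj⟩
              _ = N v j := hsym j v
        rw [rank_eq_rank_deleteRow_of_mem N' v hmem, hrk']
  · right; right
    have hcol : ∀ P : Matrix ι ι (ZMod 2), (∀ j, j ≠ v → P v j = N v j) →
        ∀ c : {u : ι // u ≠ v} → ZMod 2, (∑ u, c u • N u.1) = P v → False := by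
      intro P hP c hc
      apply hz
      refine (Submodule.mem_span_range_iff_exists_fun _).mpr ?_
      refine ⟨c, funext fun u => ?_⟩
      rw [Finset.sum_apply]
      simp only [Pi.smul_apply, smul_eq_mul, vdel, Matrix.transpose_apply,
        Matrix.submatrix_apply]
      have hcu := congrFun hc u.1
      rw [Finset.sum_apply] at hcu
      simp only [Pi.smul_apply, smul_eq_mul] at hcu
      calc (∑ j, c j * N u.1 j.1) = ∑ j, c j * N j.1 u.1 := by
            refine Finset.sum_congr rfl fun j _ => by rw [hsym u.1 j.1]
        _ = P v u.1 := hcu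
        _ = N v u.1 := hP u.1 u.2
        _ = N u.1 v := hsym v u.1
    have hnmem : N v ∉ Submodule.span (ZMod 2)
        (Set.range fun u : {u : ι // u ≠ v} => N u.1) := by
      rw [Submodule.mem_span_range_iff_exists_fun]
      rintro ⟨c, hc⟩
      exact hcol N (fun _ _ => rfl) c hc
    have hnmem' : N' v ∉ Submodule.span (ZMod 2)
        (Set.range fun u : {u : ι // u ≠ v} => N' u.1) := by
      rw [hrangeN', Submodule.mem_span_range_iff_exists_fun]
      rintro ⟨c, hc⟩
      exact hcol N' hN'vj c hc
    have hz' : (fun u : {u : ι // u ≠ v} => N' u.1 v) ∉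
        Submodule.span (ZMod 2) (Set.range (vdel N' v)ᵀ) := by
      rw [hN'def, vdel_add_std]
      convert hz using 2
      funext u
      show N' u.1 v = N u.1 v
      rw [hrowN' u]
    constructor
    · rw [rank_eq_rank_deleteRow_of_not_mem N v hnmem,
        rank_deleteRow_eq_principal_of_not_mem N v hz]
    · rw [rank_eq_rank_deleteRow_of_not_mem N' v hnmem',
        rank_deleteRow_eq_principal_of_not_mem N' v hz', hN'def, vdel_add_std]


lemma exists_nonsingular_principal (N : Matrix ι ι K) (hN : N.IsSymm) :
    ∃ T : Finset ι, T.card = N.rank ∧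
      (N.submatrix (Subtype.val : ↥T → ι) Subtype.val).det ≠ 0 := by
  classical
  have hsym : ∀ i j, N i j = N j i := fun i j => hN.apply j i
  obtain ⟨b, hbs, hbspan, hbind⟩ := exists_linearIndependent K (Set.range N)
  haveI : Fintype b := ((Set.finite_range N).subset hbs).fintype
  have hex : ∀ x : b, ∃ i, N i = x := fun x => hbs x.2
  choose f hf using hex
  have finj : Function.Injective f := by
    intro x y hxy
    apply Subtype.ext
    rw [← hf x, ← hf y, hxy]
  refine ⟨Finset.univ.image f, ?_, ?_⟩
  · rw [Finset.card_image_of_injective _ finj, Finset.card_univ]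
    rw [Matrix.rank_eq_finrank_span_row, Matrix.row.eq_1, ← hbspan]
    have := linearIndependent_iff_card_eq_finrank_span.mp hbind
    rwa [Subtype.range_coe, Set.finrank] at this
  · set T : Finset ι := Finset.univ.image f with hT
    -- the family of full rows indexed by T
    have hmemb : ∀ t : ↥T, N t.1 ∈ b := by
      intro t
      obtain ⟨y, -, hy⟩ := Finset.mem_image.mp t.2
      have h1 : N t.1 = ↑y := by rw [← hy, hf]
      rw [h1]; exact y.2
    have hrange : (Set.range fun t : ↥T => N t.1) = b := by
      ext x
      constructor
      · rintro ⟨t, rfl⟩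
        exact hmemb t
      · intro hx
        exact ⟨⟨f ⟨x, hx⟩, Finset.mem_image_of_mem f (Finset.mem_univ _)⟩, hf _⟩
    have hTind : LinearIndependent K (fun t : ↥T => N t.1) := by
      let e : ↥T → b := fun t => ⟨N t.1, hmemb t⟩
      have einj : Function.Injective e := by
        intro s t hst
        have h1 : N s.1 = N t.1 := Subtype.ext_iff.mp hst
        obtain ⟨x, -, hx⟩ := Finset.mem_image.mp s.2
        obtain ⟨y, -, hy⟩ := Finset.mem_image.mp t.2
        have hxy : x = y := by
          apply Subtype.ext
          rw [← hf x, ← hf y, hx, hy]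
          exact h1
        apply Subtype.ext
        rw [← hx, ← hy, hxy]
      have heq : (fun t : ↥T => N t.1) = Subtype.val ∘ e := rfl
      rw [heq]
      exact hbind.comp e einj
    -- rows of the principal submatrix are linearly independent
    have hsubind : LinearIndependent K (fun t : ↥T => (N.submatrix (Subtype.val : ↥T → ι) (Subtype.val : ↥T → ι)) t) := by
      rw [Fintype.linearIndependent_iff]
      intro g hg
      -- define the full combination
      have hcoord : ∀ s : ↥T, (∑ t : ↥T, g t * N t.1 s.1) = 0 := by
        intro s
        have := congrFun hg s
        rw [Finset.sum_apply] at this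
        simpa [Matrix.submatrix_apply] using this
      have hy : ∀ j : ι, (∑ t : ↥T, g t * N t.1 j) = 0 := by
        intro j
        have hj : N j ∈ Submodule.span K (Set.range fun t : ↥T => N t.1) := by
          rw [hrange, hbspan]
          exact Submodule.subset_span (Set.mem_range_self j)
        obtain ⟨c, hc⟩ := (Submodule.mem_span_range_iff_exists_fun _).mp hj
        have hcc : ∀ i, (∑ s : ↥T, c s * N s.1 i) = N j i := by
          intro i
          have := congrFun hc i
          rw [Finset.sum_apply] at this
          simpa using this
        calc (∑ t : ↥T, g t * N t.1 j)
            = ∑ t : ↥T, g t * N j t.1 := by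
              exact Finset.sum_congr rfl fun t _ => by rw [hsym t.1 j]
          _ = ∑ t : ↥T, g t * (∑ s : ↥T, c s * N s.1 t.1) := by
              exact Finset.sum_congr rfl fun t _ => by rw [hcc t.1]
          _ = ∑ t : ↥T, ∑ s : ↥T, g t * (c s * N s.1 t.1) := by
              exact Finset.sum_congr rfl fun t _ => Finset.mul_sum _ _ _
          _ = ∑ s : ↥T, ∑ t : ↥T, g t * (c s * N s.1 t.1) := Finset.sum_comm
          _ = ∑ s : ↥T, c s * (∑ t : ↥T, g t * N t.1 s.1) := by
              refine Finset.sum_congr rfl fun s _ => ?_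
              rw [Finset.mul_sum]
              exact Finset.sum_congr rfl fun t _ => by
                rw [hsym s.1 t.1]; ring
          _ = 0 := by
              refine Finset.sum_eq_zero fun s _ => ?_
              rw [hcoord s, mul_zero]
      have hgz : (∑ t : ↥T, g t • (fun j => N t.1 j)) = 0 := by
        funext j
        rw [Finset.sum_apply]
        simpa using hy j
      intro i
      exact Fintype.linearIndependent_iff.mp hTind g hgz i
    have := Matrix.linearIndependent_rows_iff_isUnit.mp hsubind
    rw [Matrix.isUnit_iff_isUnit_det, isUnit_iff_ne_zero] at this
    exact this


end RankTools

section FinsetLevel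

variable {V : Type*} [Fintype V] [DecidableEq V]

noncomputable def rk (M : Matrix V V (ZMod 2)) (S : Finset V) : ℕ := (psub M S).rank

lemma psub_isSymm {M : Matrix V V (ZMod 2)} (hM : M.IsSymm) (S : Finset V) :
    (psub M S).IsSymm := by
  unfold Matrix.IsSymm psub
  rw [Matrix.transpose_submatrix]
  rw [hM]

lemma lcomp_isSymm {M : Matrix V V (ZMod 2)} (hM : M.IsSymm) (v : V) :
    (lcomp M v).IsSymm := by
  unfold Matrix.IsSymm lcomp
  rw [Matrix.transpose_add, hM]
  congr 1
  ext i j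
  by_cases h1 : v = i <;> by_cases h2 : v = j <;>
    simp [Matrix.single, Matrix.transpose_apply, and_comm, *]

lemma vdel_isSymm {M : Matrix V V (ZMod 2)} (hM : M.IsSymm) (v : V) :
    (vdel M v).IsSymm := by
  unfold Matrix.IsSymm vdel
  rw [Matrix.transpose_submatrix, hM]

lemma rk_mono (M : Matrix V V (ZMod 2)) {S T : Finset V} (h : S ⊆ T) :
    rk M S ≤ rk M T := by
  have he : psub M S = (psub M T).submatrix
      (fun x : ↥S => (⟨x.1, h x.2⟩ : ↥T)) (fun x : ↥S => (⟨x.1, h x.2⟩ : ↥T)) := rfl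
  rw [rk, rk, he]
  exact rank_submatrix_le'' _ _ _

lemma rk_le_card (M : Matrix V V (ZMod 2)) (S : Finset V) : rk M S ≤ S.card := by
  have := Matrix.rank_le_card_width (psub M S)
  rwa [Fintype.card_coe] at this

lemma det_ne_zero_iff_rk (M : Matrix V V (ZMod 2)) (S : Finset V) :
    (psub M S).det ≠ 0 ↔ rk M S = S.card := by
  constructor
  · intro h
    have : IsUnit (psub M S) := by
      rw [Matrix.isUnit_iff_isUnit_det, isUnit_iff_ne_zero]; exact h
    have := Matrix.rank_of_isUnit _ this
    rwa [Fintype.card_coe] at this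
  · intro h
    have hind : LinearIndependent (ZMod 2) (psub M S) := by
      show LinearIndependent (ZMod 2) (psub M S).row
      rw [linearIndependent_iff_card_eq_finrank_span, Fintype.card_coe, Set.finrank,
        ← Matrix.rank_eq_finrank_span_row]
      exact h.symm
    have := Matrix.linearIndependent_rows_iff_isUnit.mp hind
    rwa [Matrix.isUnit_iff_isUnit_det, isUnit_iff_ne_zero] at this

def eraseEquiv (X : Finset V) {v : V} (hv : v ∈ X) :
    {u : ↥X // u ≠ (⟨v, hv⟩ : ↥X)} ≃ ↥(X.erase v) where
  toFun u := ⟨u.1.1, Finset.mem_erase.mpr ⟨fun h => u.2 (Subtype.ext h), u.1.2⟩⟩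
  invFun w := ⟨⟨w.1, Finset.mem_of_mem_erase w.2⟩,
    fun h => (Finset.mem_erase.mp w.2).1 (congrArg Subtype.val h)⟩
  left_inv u := by apply Subtype.ext; apply Subtype.ext; rfl
  right_inv w := rfl

lemma rk_erase_eq (M : Matrix V V (ZMod 2)) {X : Finset V} {v : V} (hv : v ∈ X) :
    rk M (X.erase v) = (vdel (psub M X) (⟨v, hv⟩ : ↥X)).rank := by
  have he : psub M (X.erase v) = (vdel (psub M X) (⟨v, hv⟩ : ↥X)).submatrix
      (eraseEquiv X hv).symm (eraseEquiv X hv).symm := rfl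
  rw [rk, he, Matrix.rank_submatrix]

lemma psub_lcomp_of_mem (M : Matrix V V (ZMod 2)) {X : Finset V} {v : V} (hv : v ∈ X) :
    psub (lcomp M v) X
      = psub M X + Matrix.single (⟨v, hv⟩ : ↥X) (⟨v, hv⟩ : ↥X) 1 := by
  ext x y
  simp only [psub, lcomp, Matrix.submatrix_apply, Matrix.add_apply]
  congr 1
  by_cases h1 : v = x.1
  · by_cases h2 : v = y.1
    · have hx : x = (⟨v, hv⟩ : ↥X) := Subtype.ext h1.symm
      have hy : y = (⟨v, hv⟩ : ↥X) := Subtype.ext h2.symm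
      subst hx; subst hy
      simp [Matrix.single]
    · rw [Matrix.single_apply_of_ne _ _ _ _ _ (fun h => h2 h.2),
        Matrix.single_apply_of_ne _ _ _ _ _
          (fun h => h2 (congrArg Subtype.val h.2))]
  · rw [Matrix.single_apply_of_ne _ _ _ _ _ (fun h => h1 h.1),
      Matrix.single_apply_of_ne _ _ _ _ _
        (fun h => h1 (congrArg Subtype.val h.1))]

lemma psub_lcomp_of_not_mem (M : Matrix V V (ZMod 2)) {X : Finset V} {v : V} (hv : v ∉ X) :
    psub (lcomp M v) X = psub M X := by
  ext x y
  simp only [psub, lcomp, Matrix.submatrix_apply, Matrix.add_apply]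
  rw [Matrix.single_apply_of_ne _ _ _ _ _
    (fun h => hv (by rw [h.1]; exact x.2)), add_zero]

lemma rk_tri (M : Matrix V V (ZMod 2)) (hM : M.IsSymm) {X : Finset V} {v : V} (hv : v ∈ X) :
    (rk M X = rk M (X.erase v) ∧ rk (lcomp M v) X = rk M (X.erase v) + 1) ∨
    (rk M X = rk M (X.erase v) + 1 ∧ rk (lcomp M v) X = rk M (X.erase v)) ∨
    (rk M X = rk M (X.erase v) + 2 ∧ rk (lcomp M v) X = rk M (X.erase v) + 2) := by
  have h := rank_border_trichotomy (psub M X) (psub_isSymm hM X) (⟨v, hv⟩ : ↥X)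
  rw [← psub_lcomp_of_mem M hv, ← rk_erase_eq M hv] at h
  exact h



lemma rk_erase_le (M : Matrix V V (ZMod 2)) (hM : M.IsSymm) (X : Finset V) (v : V) :
    rk M X ≤ rk M (X.erase v) + 2 := by
  by_cases hv : v ∈ X
  · rcases rk_tri M hM hv with ⟨h, _⟩ | ⟨h, _⟩ | ⟨h, _⟩ <;> omega
  · rw [Finset.erase_eq_of_notMem hv]; omega

lemma rk_erase_ge (M : Matrix V V (ZMod 2)) (X : Finset V) (v : V) :
    rk M (X.erase v) ≤ rk M X :=
  rk_mono M (Finset.erase_subset v X)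

lemma rk_chain (M : Matrix V V (ZMod 2)) (hM : M.IsSymm) {T S : Finset V} (h : T ⊆ S) :
    rk M S ≤ rk M T + 2 * (S.card - T.card) := by
  have key : ∀ (n : ℕ) (S : Finset V), T ⊆ S → S.card - T.card = n →
      rk M S ≤ rk M T + 2 * n := by
    intro n
    induction n with
    | zero =>
      intro S h hn
      have hc := Finset.card_le_card h
      have : S = T := (Finset.eq_of_subset_of_card_le h (by omega)).symm
      subst this; omega
    | succ n ih =>
      intro S h hn
      have hc := Finset.card_le_card h
      have hne : T ≠ S := fun hTS => by rw [hTS] at hn; omega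
      obtain ⟨v, hvS, hvT⟩ : ∃ v ∈ S, v ∉ T := by
        by_contra hcon
        push_neg at hcon
        exact hne (Finset.Subset.antisymm h hcon)
      have hsub : T ⊆ S.erase v := fun x hx =>
        Finset.mem_erase.mpr ⟨fun hxv => hvT (hxv ▸ hx), h hx⟩
      have hcard : (S.erase v).card = S.card - 1 := Finset.card_erase_of_mem hvS
      have hTcard : T.card ≤ (S.erase v).card := Finset.card_le_card hsub
      have h1 := ih (S.erase v) hsub (by omega)
      have h2 := rk_erase_le M hM S v
      omega
  exact key _ S h rfl



def mapEquiv {V : Type*} {p : V → Prop} [DecidableEq V] (T₀ : Finset {x // p x}) :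
    ↥(T₀.map (Function.Embedding.subtype p)) ≃ ↥T₀ where
  toFun w := ⟨⟨w.1, Finset.property_of_mem_map_subtype T₀ w.2⟩, by
    obtain ⟨x, hx, hxe⟩ := Finset.mem_map.mp w.2
    have hxx : x = ⟨w.1, Finset.property_of_mem_map_subtype T₀ w.2⟩ := Subtype.ext hxe
    exact hxx ▸ hx⟩
  invFun t := ⟨t.1.1, Finset.mem_map_of_mem _ t.2⟩
  left_inv w := Subtype.ext rfl
  right_inv t := Subtype.ext (Subtype.ext rfl)

lemma psub_map_eq (M : Matrix V V (ZMod 2)) {p : V → Prop} [DecidablePred p]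
    (T₀ : Finset {x // p x}) :
    psub M (T₀.map (Function.Embedding.subtype p)) =
      ((M.submatrix (Subtype.val : {x // p x} → V) Subtype.val).submatrix
        (Subtype.val : ↥T₀ → {x // p x}) Subtype.val).submatrix
        (mapEquiv T₀) (mapEquiv T₀) := rfl

lemma exists_principal_witness (M : Matrix V V (ZMod 2)) (hM : M.IsSymm) (S : Finset V) :
    ∃ T, T ⊆ S ∧ T.card = rk M S ∧ (psub M T).det ≠ 0 := by
  obtain ⟨T₀, hcard, hdet⟩ := exists_nonsingular_principal (psub M S) (psub_isSymm hM S)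
  refine ⟨T₀.map (Function.Embedding.subtype _), ?_, ?_, ?_⟩
  · intro x hx
    exact Finset.property_of_mem_map_subtype T₀ hx
  · rw [Finset.card_map, hcard]; rfl
  · rw [psub_map_eq]
    rw [Matrix.det_submatrix_equiv_self (mapEquiv T₀)]
    exact hdet

lemma rk_vdel (M : Matrix V V (ZMod 2)) (v : V) (S₀ : Finset {u : V // u ≠ v}) :
    rk (vdel M v) S₀ = rk M (S₀.map (Function.Embedding.subtype _)) := by
  rw [rk, rk, psub_map_eq]
  rw [Matrix.rank_submatrix]
  rfl

lemma card_symmDiff (F A : Finset V) :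
    (symmDiff F A).card = (F \ A).card + (A \ F).card := by
  rw [symmDiff_def]
  exact Finset.card_union_of_disjoint disjoint_sdiff_sdiff

lemma card_le_rk_add (M : Matrix V V (ZMod 2)) (hM : M.IsSymm) (A F : Finset V)
    (hF : (psub M F).det ≠ 0) : A.card ≤ rk M A + (symmDiff F A).card := by
  have h1 : rk M F = F.card := (det_ne_zero_iff_rk M F).mp hF
  have h2 := rk_chain M hM (Finset.inter_subset_right : A ∩ F ⊆ F)
  have h3 : rk M (A ∩ F) ≤ rk M A := rk_mono M Finset.inter_subset_left
  have h4 : (A ∩ F).card + (F \ A).card = F.card := by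
    rw [Finset.inter_comm]
    exact Finset.card_inter_add_card_sdiff F A
  have h5 : (A ∩ F).card + (A \ F).card = A.card := Finset.card_inter_add_card_sdiff A F
  have h6 := card_symmDiff F A
  have h7 : rk M (A ∩ F) ≤ (A ∩ F).card := rk_le_card M _
  omega

lemma symmDiff_compl (F A : Finset V) : symmDiff F Aᶜ = (symmDiff F A)ᶜ := by
  ext x
  simp only [Finset.mem_symmDiff, Finset.mem_compl]
  tauto

lemma twistWidth_eq_rk (M : Matrix V V (ZMod 2)) (hM : M.IsSymm) (A : Finset V) :
    twistWidth M A = rk M A + rk M Aᶜ := by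
  have hle : rk M A ≤ A.card := rk_le_card M A
  have hleC : rk M Aᶜ ≤ Aᶜ.card := rk_le_card M Aᶜ
  have hAc : Aᶜ.card = Fintype.card V - A.card := Finset.card_compl A
  have hAcard : A.card ≤ Fintype.card V := Finset.card_le_univ A
  have hinf : IsLeast {k | ∃ S, (psub M (symmDiff S A)).det ≠ 0 ∧ S.card = k}
      (A.card - rk M A) := by
    constructor
    · obtain ⟨T, hTA, hTcard, hTdet⟩ := exists_principal_witness M hM A
      refine ⟨symmDiff T A, ?_, ?_⟩
      · rw [symmDiff_symmDiff_cancel_right]; exact hTdet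
      · have h1 := card_symmDiff T A
        have h2 : T \ A = ∅ := Finset.sdiff_eq_empty_iff_subset.mpr hTA
        have h3 : (A \ T).card = A.card - T.card := Finset.card_sdiff_of_subset hTA
        rw [h1, h2] at *
        simp only [Finset.card_empty] at *
        omega
    · rintro k ⟨S, hdet, rfl⟩
      have hS : S = symmDiff (symmDiff S A) A := (symmDiff_symmDiff_cancel_right A S).symm
      have := card_le_rk_add M hM A (symmDiff S A) hdet
      rw [← hS] at this
      omega
  have hsup : IsGreatest {k | ∃ S, (psub M (symmDiff S A)).det ≠ 0 ∧ S.card = k}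
      (A.card + rk M Aᶜ) := by
    constructor
    · obtain ⟨T, hTA, hTcard, hTdet⟩ := exists_principal_witness M hM Aᶜ
      refine ⟨symmDiff T A, ?_, ?_⟩
      · rw [symmDiff_symmDiff_cancel_right]; exact hTdet
      · have hdisj : Disjoint T A := by
          rw [Finset.disjoint_left]
          intro x hxT hxA
          exact (Finset.mem_compl.mp (hTA hxT)) hxA
        have h1 := card_symmDiff T A
        have h2 : T \ A = T := Finset.sdiff_eq_self_of_disjoint hdisj
        have h3 : A \ T = A := Finset.sdiff_eq_self_of_disjoint hdisj.symm
        rw [h2, h3] at h1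
        omega
    · rintro k ⟨S, hdet, rfl⟩
      have hS : S = symmDiff (symmDiff S A) A := (symmDiff_symmDiff_cancel_right A S).symm
      have hkey := card_le_rk_add M hM Aᶜ (symmDiff S A) hdet
      rw [symmDiff_compl, ← hS, Finset.card_compl, Finset.card_compl] at hkey
      have hSle : S.card ≤ Fintype.card V := Finset.card_le_univ S
      omega
  rw [twistWidth, sysWidth, hsup.csSup_eq, hinf.csInf_eq]
  omega



lemma pair_sum (M : Matrix V V (ZMod 2)) (hM : M.IsSymm) {v : V} {X : Finset V} (hv : v ∈ X) :
    (-(1:ℚ)/2) ^ rk M X + (-(1:ℚ)/2) ^ rk (lcomp M v) X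
      = (1/2) * (-(1:ℚ)/2) ^ rk M (X.erase v) := by
  rcases rk_tri M hM hv with ⟨h1, h2⟩ | ⟨h1, h2⟩ | ⟨h1, h2⟩ <;> rw [h1, h2] <;>
    simp only [pow_add, pow_succ] <;> ring

lemma map_compl_eq {v : V} (A₀ : Finset {u : V // u ≠ v}) :
    (A₀ᶜ).map (Function.Embedding.subtype _) =
      ((A₀.map (Function.Embedding.subtype _))ᶜ).erase v := by
  ext u
  simp only [Finset.mem_map, Finset.mem_erase, Finset.mem_compl,
    Function.Embedding.coe_subtype]
  constructor
  · rintro ⟨x, hx, rfl⟩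
    exact ⟨x.2, fun ⟨y, hy, hyx⟩ => hx (by rwa [show y = x from Subtype.ext hyx] at hy)⟩
  · rintro ⟨huv, hnm⟩
    exact ⟨⟨u, huv⟩, fun hmem => hnm ⟨⟨u, huv⟩, hmem, rfl⟩, rfl⟩

lemma subtype_map_self {v : V} (A₀ : Finset {u : V // u ≠ v}) :
    Finset.subtype (· ≠ v) (A₀.map (Function.Embedding.subtype _)) = A₀ := by
  ext x
  simp only [Finset.mem_subtype, Finset.mem_map, Function.Embedding.coe_subtype]
  constructor
  · rintro ⟨y, hy, hyx⟩
    rwa [show y = x from Subtype.ext hyx] at hy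
  · intro hx
    exact ⟨x, hx, rfl⟩

theorem twistPoly_eval_neg_half'
    (M : Matrix V V (ZMod 2)) (hM : M.IsSymm) (v : V) :
    Polynomial.aeval (-(1 : ℚ) / 2) (twistPoly M)
      + Polynomial.aeval (-(1 : ℚ) / 2) (twistPoly (lcomp M v))
      - Polynomial.aeval (-(1 : ℚ) / 2) (twistPoly (vdel M v)) = 0 := by
  classical
  have hM' : (lcomp M v).IsSymm := lcomp_isSymm hM v
  have hMd : (vdel M v).IsSymm := vdel_isSymm hM v
  rw [twistPoly, twistPoly, twistPoly, map_sum, map_sum, map_sum]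
  simp only [map_pow, aeval_X]
  -- rewrite widths via ranks
  have e1 : (∑ A : Finset V, (-(1:ℚ)/2) ^ twistWidth M A)
      = ∑ A : Finset V, (-(1:ℚ)/2) ^ (rk M A + rk M Aᶜ) :=
    Finset.sum_congr rfl fun A _ => by rw [twistWidth_eq_rk M hM A]
  have e2 : (∑ A : Finset V, (-(1:ℚ)/2) ^ twistWidth (lcomp M v) A)
      = ∑ A : Finset V, (-(1:ℚ)/2) ^ (rk (lcomp M v) A + rk (lcomp M v) Aᶜ) :=
    Finset.sum_congr rfl fun A _ => by rw [twistWidth_eq_rk (lcomp M v) hM' A]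
  rw [e1, e2]
  -- convert the vdel sum to a sum over subsets of univ.erase v
  have e3 : (∑ A₀ : Finset {u : V // u ≠ v}, (-(1:ℚ)/2) ^ twistWidth (vdel M v) A₀)
      = ∑ B ∈ (Finset.univ.erase v).powerset,
          (-(1:ℚ)/2) ^ (rk M B + rk M (Bᶜ.erase v)) := by
    refine Finset.sum_nbij' (fun A₀ => A₀.map (Function.Embedding.subtype _))
      (fun B => Finset.subtype (· ≠ v) B) ?_ ?_ ?_ ?_ ?_
    · intro A₀ _
      rw [Finset.mem_powerset]
      intro x hx
      refine Finset.mem_erase.mpr ⟨Finset.property_of_mem_map_subtype A₀ hx, Finset.mem_univ x⟩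
    · intro B _
      exact Finset.mem_univ _
    · intro A₀ _
      exact subtype_map_self A₀
    · intro B hB
      show (Finset.subtype (· ≠ v) B).map (Function.Embedding.subtype _) = B
      rw [Finset.subtype_map]
      rw [Finset.mem_powerset] at hB
      apply Finset.filter_true_of_mem
      intro x hx
      exact (Finset.mem_erase.mp (hB hx)).1
    · intro A₀ _
      rw [twistWidth_eq_rk (vdel M v) hMd A₀, rk_vdel, rk_vdel, map_compl_eq]
  rw [e3]
  -- split the two full sums by membership of v
  have hsplit : ∀ f : Finset V → ℚ, (∑ A : Finset V, f A)
      = ∑ B ∈ (Finset.univ.erase v).powerset, f B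
        + ∑ B ∈ (Finset.univ.erase v).powerset, f (insert v B) := by
    intro f
    calc (∑ A : Finset V, f A) = ∑ A ∈ (Finset.univ : Finset V).powerset, f A := by
          rw [Finset.powerset_univ]
      _ = ∑ A ∈ (insert v (Finset.univ.erase v)).powerset, f A := by
          rw [Finset.insert_erase (Finset.mem_univ v)]
      _ = _ := Finset.sum_powerset_insert (Finset.notMem_erase v Finset.univ) f
  rw [hsplit fun A => (-(1:ℚ)/2) ^ (rk M A + rk M Aᶜ),
    hsplit fun A => (-(1:ℚ)/2) ^ (rk (lcomp M v) A + rk (lcomp M v) Aᶜ)]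
  rw [← Finset.sum_add_distrib, ← Finset.sum_add_distrib, ← Finset.sum_add_distrib,
    ← Finset.sum_sub_distrib]
  apply Finset.sum_eq_zero
  intro B hB
  rw [Finset.mem_powerset] at hB
  have hvB : v ∉ B := fun h => Finset.notMem_erase v _ (hB h)
  have hvBc : v ∈ Bᶜ := Finset.mem_compl.mpr hvB
  have hins : (insert v B)ᶜ = Bᶜ.erase v := Finset.compl_insert
  have hrB : rk (lcomp M v) B = rk M B := by
    rw [rk, rk, psub_lcomp_of_not_mem M hvB]
  have hrBc : rk (lcomp M v) (Bᶜ.erase v) = rk M (Bᶜ.erase v) := by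
    rw [rk, rk, psub_lcomp_of_not_mem M (Finset.notMem_erase v _)]
  have hp1 := pair_sum M hM hvBc
  have hp2 := pair_sum M hM (Finset.mem_insert_self v B)
  rw [Finset.erase_insert hvB] at hp2
  rw [hins, hrB, hrBc]
  simp only [pow_add]
  linear_combination ((-(1:ℚ)/2) ^ rk M B) * hp1 + ((-(1:ℚ)/2) ^ rk M (Bᶜ.erase v)) * hp2



end FinsetLevel

/-- Corollary 4.5: for any looped simple graph `G` and vertex `v`,
`T_G(−1/2) + T_{G+v}(−1/2) − T_{G−v}(−1/2) = 0`. -/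
theorem twistPoly_eval_neg_half
    {V : Type*} [Fintype V] [DecidableEq V]
    (M : Matrix V V (ZMod 2)) (hM : M.IsSymm) (v : V) :
    Polynomial.aeval (-(1 : ℚ) / 2) (twistPoly M)
      + Polynomial.aeval (-(1 : ℚ) / 2) (twistPoly (lcomp M v))
      - Polynomial.aeval (-(1 : ℚ) / 2) (twistPoly (vdel M v)) = 0 :=
  twistPoly_eval_neg_half' M hM v
end
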